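/- arXiv:1105.1054 — 4 statements merged into one kernel-verified Lean document; each statement's English description precedes it below -/
import Mathlib

section
/- Let G be a finite solvable group and let H be a maximal subgroup of G that is not normal in G. Let q be a prime dividing the order of the Fitting subgroup F(H/Core_G H) of the quotient H/Core_G H. Then G has a Sylow q-subgroup Q such that the normalizer N_G(Q) is contained in H. -/
/-- The Fitting subgroup of a group `X`: the subgroup generated by (for finite groups,
the largest of) all nilpotent normal subgroups of `X`. -/
def fittingSubgroup (X : Type*) [Group X] : Subgroup X :=
  sSup {N : Subgroup X | N.Normal ∧ Group.IsNilpotent N}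

open Pointwise

private lemma auxCardSupDvd {G : Type*} [Group G] [Finite G] (A B : Subgroup G) [A.Normal] :
    Nat.card ↥(A ⊔ B) ∣ Nat.card A * Nat.card B := by
  have h1 : Nat.card (A.subgroupOf (A ⊔ B)) * (A.subgroupOf (A ⊔ B)).index
      = Nat.card ↥(A ⊔ B) := Subgroup.card_mul_index _
  have h2 : (A.subgroupOf (A ⊔ B)).index = A.relIndex B := by
    have := Subgroup.relIndex_sup_left (K := A) (H := B)
    simpa [Subgroup.relIndex] using this
  have h3 : Nat.card (A.subgroupOf (A ⊔ B)) = Nat.card A :=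
    Nat.card_congr (Subgroup.subgroupOfEquivOfLe le_sup_left).toEquiv
  have h4 : A.relIndex B ∣ Nat.card B :=
    Dvd.intro_left _ (Subgroup.card_mul_index (A.subgroupOf B))
  rw [← h1, h2, h3]
  exact mul_dvd_mul dvd_rfl h4

private lemma auxCardSSupDvd {G : Type*} [Group G] [Finite G] (S : Set (Subgroup G))
    (h : ∀ N ∈ S, N.Normal) :
    Nat.card ↥(sSup S) ∣ ∏ N ∈ S.toFinite.toFinset, Nat.card N := by
  classical
  have key : ∀ (s : Finset (Subgroup G)), (∀ N ∈ s, N.Normal) →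
      Nat.card ↥(s.sup id) ∣ ∏ N ∈ s, Nat.card ↥N := by
    intro s
    induction s using Finset.induction_on with
    | empty => simp
    | @insert a s ha ih =>
      intro hnorm
      rw [Finset.sup_insert, Finset.prod_insert ha]
      haveI : a.Normal := hnorm a (Finset.mem_insert_self a s)
      exact (auxCardSupDvd a (s.sup id)).trans
        (mul_dvd_mul dvd_rfl (ih fun N hN => hnorm N (Finset.mem_insert_of_mem hN)))
  have hS : sSup S = (S.toFinite.toFinset).sup id := by
    rw [Finset.sup_id_eq_sSup, Set.Finite.coe_toFinset]
  rw [hS]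
  exact key _ (fun N hN => h N (S.toFinite.mem_toFinset.mp hN))

private lemma auxExistsNormalPSubgroup {X : Type*} [Group X] [Finite X] {q : ℕ} (hq : q.Prime)
    (hdvd : q ∣ Nat.card (fittingSubgroup X)) :
    ∃ R : Subgroup X, R.Normal ∧ IsPGroup q R ∧ R ≠ ⊥ := by
  classical
  haveI := Fact.mk hq
  set S := {N : Subgroup X | N.Normal ∧ Group.IsNilpotent N} with hSdef
  have hnorm : ∀ N ∈ S, N.Normal := fun N hN => hN.1
  have h1 : q ∣ ∏ N ∈ S.toFinite.toFinset, Nat.card N :=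
    hdvd.trans (auxCardSSupDvd S hnorm)
  obtain ⟨N₀, hN₀mem, hN₀dvd⟩ := hq.prime.exists_mem_finset_dvd h1
  have hN₀S : N₀ ∈ S := S.toFinite.mem_toFinset.mp hN₀mem
  haveI : N₀.Normal := hN₀S.1
  haveI : Group.IsNilpotent ↥N₀ := hN₀S.2
  obtain ⟨Syl⟩ : Nonempty (Sylow q ↥N₀) := Sylow.nonempty
  have htfae := (isNilpotent_of_finite_tfae (G := ↥N₀)).out 0 3
  have hnormal : (↑Syl : Subgroup ↥N₀).Normal := htfae.mp inferInstance q (Fact.mk hq) Syl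
  have hchar : (↑Syl : Subgroup ↥N₀).Characteristic :=
    Sylow.characteristic_of_normal Syl hnormal
  refine ⟨(↑Syl : Subgroup ↥N₀).map N₀.subtype, ?_, Syl.2.map _, ?_⟩
  · constructor
    intro a ha g
    obtain ⟨b, hb, rfl⟩ := Subgroup.mem_map.mp ha
    have hmapeq : (↑Syl : Subgroup ↥N₀).map (MulAut.conjNormal g).toMonoidHom = ↑Syl :=
      Subgroup.characteristic_iff_map_eq.mp hchar _
    have hb2 : MulAut.conjNormal g b ∈ (↑Syl : Subgroup ↥N₀) := by
      rw [← hmapeq]; exact Subgroup.mem_map_of_mem _ hb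
    refine Subgroup.mem_map.mpr ⟨MulAut.conjNormal g b, hb2, ?_⟩
    simp [MulAut.conjNormal_apply]
  · have hSylne : (↑Syl : Subgroup ↥N₀) ≠ ⊥ := Syl.ne_bot_of_dvd_card hN₀dvd
    intro hbot
    exact hSylne ((Subgroup.map_eq_bot_iff_of_injective _ N₀.subtype_injective).mp hbot)

/-- **Theorem 1.** Let `H` be a non-normal maximal subgroup of a finite solvable group `G`
and let `q` be a prime dividing the order of `F(H / Core_G H)`. Then `G` has a Sylow
`q`-subgroup `Q` with `N_G(Q) ≤ H`. -/
theorem normalizer_sylow_le_of_maximal_not_normal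
    {G : Type*} [Group G] [Finite G] [Group.IsSolvable G]
    (H : Subgroup G) (hmax : IsCoatom H) (hnn : ¬ H.Normal)
    (q : ℕ) (hq : q.Prime)
    (hdvd : q ∣ Nat.card (fittingSubgroup (H ⧸ H.normalCore.subgroupOf H))) :
    ∃ Q : Sylow q G, Subgroup.normalizer ((Q : Subgroup G) : Set G) ≤ H := by
  classical
  haveI := Fact.mk hq
  set K := H.normalCore with hKdef
  set π : G →* G ⧸ K := QuotientGroup.mk' K with hπdef
  have hπs : Function.Surjective π := QuotientGroup.mk'_surjective K
  have hkerπ : π.ker = K := QuotientGroup.ker_mk' K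
  obtain ⟨Hb, hHbdef⟩ : ∃ Hb : Subgroup (G ⧸ K), Hb = H.map π := ⟨_, rfl⟩
  have hKH : K ≤ H := H.normalCore_le
  have hcomapHb : Hb.comap π = H := by
    rw [hHbdef, Subgroup.comap_map_eq, hkerπ, sup_eq_left.mpr hKH]
  -- `Hb` is a proper subgroup
  have hHbne : Hb ≠ ⊤ := by
    intro h
    apply hmax.1
    rw [← hcomapHb, h, Subgroup.comap_top]
  -- `Hb` is maximal
  have hHbmax : ∀ b : Subgroup (G ⧸ K), Hb < b → b = ⊤ := by
    intro b hb
    have h1 : H ≤ b.comap π :=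
      le_trans (le_of_eq hcomapHb.symm) (Subgroup.comap_mono hb.le)
    have h2 : H ≠ b.comap π := by
      intro h
      exact hb.ne (hHbdef.trans ((congrArg (Subgroup.map π) h).trans
        (Subgroup.map_comap_eq_self_of_surjective hπs b)))
    have htop := hmax.2 _ (lt_of_le_of_ne h1 h2)
    calc b = (b.comap π).map π := (Subgroup.map_comap_eq_self_of_surjective hπs b).symm
    _ = ⊤ := by rw [htop]; exact Subgroup.map_top_of_surjective π hπs
  -- `Hb` is core-free
  have hcore : ∀ W : Subgroup (G ⧸ K), W.Normal → W ≤ Hb → W = ⊥ := by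
    intro W hW hWle
    haveI := hW
    haveI : (W.comap π).Normal := hW.comap π
    have h1 : W.comap π ≤ H := le_trans (Subgroup.comap_mono hWle) (le_of_eq hcomapHb)
    have h2 : W.comap π ≤ K := Subgroup.normal_le_normalCore.mpr h1
    have h3 : W = (W.comap π).map π := (Subgroup.map_comap_eq_self_of_surjective hπs W).symm
    rw [h3]
    refine le_bot_iff.mp ?_
    intro x hx
    obtain ⟨y, hy, rfl⟩ := Subgroup.mem_map.mp hx
    have : y ∈ π.ker := hkerπ.symm ▸ h2 hy
    simpa [Subgroup.mem_bot] using this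
  haveI hGQnt : Nontrivial (G ⧸ K) := by
    by_contra hnt
    rw [not_nontrivial_iff_subsingleton] at hnt
    apply hHbne
    refine top_le_iff.mp ?_
    intro x _
    have : x = 1 := Subsingleton.elim x 1
    rw [this]; exact Hb.one_mem
  -- a nontrivial normal `q`-subgroup `R₁` of `Hb`
  obtain ⟨R₀, hR₀n, hR₀p, hR₀ne⟩ := auxExistsNormalPSubgroup hq hdvd
  set f : ↥H →* G ⧸ K := π.comp H.subtype with hfdef
  have hfker : f.ker = K.subgroupOf H := by
    rw [hfdef, ← MonoidHom.comap_ker, hkerπ]; rfl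
  have hfrange : f.range = Hb := by
    rw [hfdef, MonoidHom.range_comp, Subgroup.range_subtype, ← hHbdef]
  haveI : (K.subgroupOf H).Normal := Subgroup.normal_subgroupOf
  let e : (↥H ⧸ K.subgroupOf H) ≃* ↥Hb :=
    (QuotientGroup.quotientMulEquivOfEq hfker.symm).trans
      ((QuotientGroup.quotientKerEquivRange f).trans (MulEquiv.subgroupCongr hfrange))
  set R₁ : Subgroup ↥Hb := R₀.map e.toMonoidHom with hR₁def
  have hR₁n : R₁.Normal := hR₀n.map e.toMonoidHom e.surjective
  have hR₁p : IsPGroup q R₁ := hR₀p.map _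
  have hR₁ne : R₁ ≠ ⊥ := fun h =>
    hR₀ne ((Subgroup.map_eq_bot_iff_of_injective _ e.injective).mp h)
  set R : Subgroup (G ⧸ K) := R₁.map Hb.subtype with hRdef
  have hRle : R ≤ Hb := Subgroup.map_subtype_le R₁
  have hRp : IsPGroup q R := hR₁p.map _
  have hRne : R ≠ ⊥ := fun h =>
    hR₁ne ((Subgroup.map_eq_bot_iff_of_injective _ Hb.subtype_injective).mp h)
  have hRconj : ∀ h ∈ Hb, ∀ x ∈ R, h * x * h⁻¹ ∈ R := by
    intro h hh x hx
    obtain ⟨b, hb, rfl⟩ := Subgroup.mem_map.mp hx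
    exact Subgroup.mem_map.mpr
      ⟨(⟨h, hh⟩ : ↥Hb) * b * (⟨h, hh⟩ : ↥Hb)⁻¹, hR₁n.conj_mem b hb ⟨h, hh⟩, rfl⟩
  -- a minimal normal subgroup `V`
  obtain ⟨z, hz⟩ := exists_ne (1 : G ⧸ K)
  have htopbot : (⊤ : Subgroup (G ⧸ K)) ≠ ⊥ :=
    fun h => hz (Subgroup.mem_bot.mp (h ▸ Subgroup.mem_top z))
  obtain ⟨V, hVS, hVmin'⟩ := (Finite.to_wellFoundedLT (α := Subgroup (G ⧸ K))).wf.has_min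
    {N : Subgroup (G ⧸ K) | N.Normal ∧ N ≠ ⊥} ⟨⊤, inferInstance, htopbot⟩
  obtain ⟨hVnormal, hVne⟩ := hVS
  haveI := hVnormal
  have hVmin : ∀ W : Subgroup (G ⧸ K), W.Normal → W ≤ V → W ≠ ⊥ → W = V := by
    intro W hn hle hne
    by_contra h
    exact hVmin' W ⟨hn, hne⟩ (lt_of_le_of_ne hle h)
  have hVHbsup : V ⊔ Hb = ⊤ := by
    have hVnle : ¬ V ≤ Hb := fun h => hVne (hcore V hVnormal h)
    refine hHbmax _ (lt_of_le_of_ne le_sup_right ?_)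
    intro h
    exact hVnle (by rw [h]; exact le_sup_left)
  have hdecomp : ∀ g : G ⧸ K, ∃ v ∈ V, ∃ h ∈ Hb, v * h = g := by
    intro g
    have hg : g ∈ (↑(V ⊔ Hb) : Set (G ⧸ K)) := by rw [hVHbsup]; trivial
    rw [Subgroup.normal_mul] at hg
    obtain ⟨v, hv, h, hh, hvh⟩ := hg
    exact ⟨v, hv, h, hh, hvh⟩
  have hnormal_helper : ∀ W : Subgroup (G ⧸ K),
      (∀ v ∈ V, ∀ x ∈ W, v * x * v⁻¹ ∈ W) → (∀ h ∈ Hb, ∀ x ∈ W, h * x * h⁻¹ ∈ W) →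
      W.Normal := by
    intro W hWV hWH
    constructor
    intro x hx g
    obtain ⟨v, hv, h, hh, rfl⟩ := hdecomp g
    have h2 : v * (h * x * h⁻¹) * v⁻¹ ∈ W := hWV v hv _ (hWH h hh x hx)
    have heq : v * h * x * (v * h)⁻¹ = v * (h * x * h⁻¹) * v⁻¹ := by group
    rw [heq]
    exact h2
  -- `V` is abelian
  have hVcent : V ≤ Subgroup.centralizer (V : Set (G ⧸ K)) := by
    have hVV : ⁅V, V⁆ ≤ V := Subgroup.commutator_le_right V V
    rcases eq_or_ne ⁅V, V⁆ V with heq | hne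
    · exfalso
      obtain ⟨n, hn⟩ := Group.IsSolvable.solvable (G := G ⧸ K)
      have hle : ∀ m : ℕ, V ≤ derivedSeries (G ⧸ K) m := by
        intro m
        induction m with
        | zero => exact le_top
        | succ k ih =>
          calc V = ⁅V, V⁆ := heq.symm
          _ ≤ _ := Subgroup.commutator_mono ih ih
      exact hVne (le_bot_iff.mp (hn ▸ hle n))
    · have hbot : ⁅V, V⁆ = ⊥ := by
        by_contra hb
        exact hne (hVmin _ inferInstance hVV hb)
      exact Subgroup.commutator_eq_bot_iff_le_centralizer.mp hbot
  have hVab : ∀ x ∈ V, ∀ y ∈ V, x * y = y * x := by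
    intro x hx y hy
    exact (Subgroup.mem_centralizer_iff.mp (hVcent hy) x hx)
  -- `V ⊓ Hb = ⊥`
  have hVHbinf : V ⊓ Hb = ⊥ := by
    refine hcore _ ?_ inf_le_right
    apply hnormal_helper
    · intro v hv x hx
      have heq : v * x * v⁻¹ = x := by
        rw [hVab v hv x hx.1, mul_assoc, mul_inv_cancel, mul_one]
      rw [heq]; exact hx
    · intro h hh x hx
      exact ⟨hVnormal.conj_mem x hx.1 h, Hb.mul_mem (Hb.mul_mem hh hx.2) (Hb.inv_mem hh)⟩
  -- `C_V(R) = ⊥`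
  have hCVR : V ⊓ Subgroup.centralizer (R : Set (G ⧸ K)) = ⊥ := by
    set W := V ⊓ Subgroup.centralizer (R : Set (G ⧸ K)) with hWdef
    have hWnormal : W.Normal := by
      apply hnormal_helper
      · intro v hv x hx
        have heq : v * x * v⁻¹ = x := by
          rw [hVab v hv x hx.1, mul_assoc, mul_inv_cancel, mul_one]
        rw [heq]; exact hx
      · intro h hh x hx
        refine Subgroup.mem_inf.mpr ⟨hVnormal.conj_mem x hx.1 h, ?_⟩
        refine Subgroup.mem_centralizer_iff.mpr ?_
        intro r hr
        have hr' : h⁻¹ * r * h ∈ R := by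
          have := hRconj h⁻¹ (Hb.inv_mem hh) r hr
          rw [inv_inv] at this; exact this
        have hc := Subgroup.mem_centralizer_iff.mp hx.2 _ hr'
        calc r * (h * x * h⁻¹) = h * ((h⁻¹ * r * h) * x) * h⁻¹ := by group
        _ = h * (x * (h⁻¹ * r * h)) * h⁻¹ := by rw [hc]
        _ = (h * x * h⁻¹) * r := by group
    rcases eq_or_ne W ⊥ with h | h
    · exact h
    · exfalso
      have hWV : W = V := hVmin W hWnormal inf_le_left h
      have hRC : R ≤ Subgroup.centralizer (V : Set (G ⧸ K)) := by
        intro r hr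
        refine Subgroup.mem_centralizer_iff.mpr ?_
        intro v hv
        have hvW : v ∈ W := hWV.symm ▸ hv
        exact (Subgroup.mem_centralizer_iff.mp hvW.2 r hr).symm
      have hW' : Subgroup.centralizer (V : Set (G ⧸ K)) ⊓ Hb = ⊥ := by
        refine hcore _ ?_ inf_le_right
        apply hnormal_helper
        · intro v hv x hx
          have hc := Subgroup.mem_centralizer_iff.mp hx.1 v hv
          have heq : v * x * v⁻¹ = x := by
            rw [hc, mul_assoc, mul_inv_cancel, mul_one]
          rw [heq]; exact hx
        · intro h hh x hx
          refine Subgroup.mem_inf.mpr ⟨?_, Hb.mul_mem (Hb.mul_mem hh hx.2) (Hb.inv_mem hh)⟩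
          refine Subgroup.mem_centralizer_iff.mpr ?_
          intro v hv
          have hv' : h⁻¹ * v * h ∈ V := by
            have := hVnormal.conj_mem v hv h⁻¹
            rw [inv_inv] at this; exact this
          have hc := Subgroup.mem_centralizer_iff.mp hx.1 _ hv'
          calc v * (h * x * h⁻¹) = h * ((h⁻¹ * v * h) * x) * h⁻¹ := by group
          _ = h * (x * (h⁻¹ * v * h)) * h⁻¹ := by rw [hc]
          _ = (h * x * h⁻¹) * v := by group
      exact hRne (le_bot_iff.mp (hW' ▸ le_inf hRC hRle))
  -- `q` does not divide `|V|`
  have hqV : ¬ q ∣ Nat.card V := by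
    intro hdvdV
    letI : MulAction ↥R ↥V :=
      MulAction.compHom _ ((MulAut.conjNormal (H := V)).comp R.subtype)
    have hsmul : ∀ (r : ↥R) (v : ↥V), ((r • v : ↥V) : G ⧸ K) = ↑r * ↑v * (↑r)⁻¹ := by
      intro r v
      rfl
    have hmod := hRp.card_modEq_card_fixedPoints (α := ↥V)
    have hfix : MulAction.fixedPoints ↥R ↥V = {1} := by
      ext v
      simp only [Set.mem_singleton_iff, MulAction.mem_fixedPoints]
      constructor
      · intro hv
        have hvmem : (v : G ⧸ K) ∈ V ⊓ Subgroup.centralizer (R : Set (G ⧸ K)) := by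
          refine Subgroup.mem_inf.mpr ⟨v.2, Subgroup.mem_centralizer_iff.mpr ?_⟩
          intro r hr
          have h1 := hv ⟨r, hr⟩
          have h2 := congrArg (Subtype.val) h1
          rw [hsmul] at h2
          -- h2 : r * v * r⁻¹ = v
          have : r * ↑v = ↑v * r := by
            calc r * ↑v = (r * ↑v * r⁻¹) * r := by group
            _ = ↑v * r := by rw [h2]
          exact this
        rw [hCVR] at hvmem
        exact Subtype.ext (by simpa using hvmem)
      · intro hv r
        rw [hv]
        refine Subtype.ext ?_
        rw [hsmul]
        simp
    have h1 : Nat.card (MulAction.fixedPoints ↥R ↥V) = 1 := by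
      rw [hfix]; simp
    rw [h1] at hmod
    have h0 : Nat.card ↥V % q = 0 := Nat.mod_eq_zero_of_dvd hdvdV
    have h2 : (1 : ℕ) % q = 1 := Nat.mod_eq_of_lt hq.one_lt
    have hmod2 : Nat.card ↥V % q = 1 % q := hmod
    omega
  -- Sylow subgroup of `Hb` is Sylow in `G ⧸ K`
  obtain ⟨Qh, hRQh⟩ := hR₁p.exists_le_sylow
  set Qb : Subgroup (G ⧸ K) := (Qh : Subgroup ↥Hb).map Hb.subtype with hQbdef
  have hQble : Qb ≤ Hb := Subgroup.map_subtype_le _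
  have hRQb : R ≤ Qb := Subgroup.map_mono hRQh
  have hQbp : IsPGroup q Qb := Qh.2.map _
  have hHbindex : Hb.index = Nat.card V := by
    have hcompl : Subgroup.IsComplement' V Hb := by
      apply Subgroup.isComplement'_of_disjoint_and_mul_eq_univ
      · exact disjoint_iff.mpr hVHbinf
      · rw [← Subgroup.normal_mul, hVHbsup, Subgroup.coe_top]
    exact hcompl.index_eq_card
  have hQbindex : ¬ q ∣ Qb.index := by
    rw [hQbdef, Subgroup.index_map_subtype]
    exact Nat.Prime.not_dvd_mul hq Qh.not_dvd_index (hHbindex ▸ hqV)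
  set Qsyl : Sylow q (G ⧸ K) := hQbp.toSylow hQbindex with hQsyldef
  have hQsylcoe : (Qsyl : Subgroup (G ⧸ K)) = Qb := IsPGroup.toSylow_coe _ _
  -- the normalizer of `Qb` is contained in `Hb`
  have hNle : Subgroup.normalizer (Qb : Set (G ⧸ K)) ≤ Hb := by
    intro n hn
    obtain ⟨v, hv, h, hh, hpr⟩ := hdecomp n
    have hvC : ∀ x ∈ Qb, v⁻¹ * x * v = x := by
      intro x hx
      have hxn : n⁻¹ * x * n ∈ Qb := by
        have := (Subgroup.mem_normalizer_iff.mp ((Subgroup.normalizer (Qb : Set (G ⧸ K))).inv_mem hn)) x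
        have := this.mp hx
        rw [inv_inv] at this; exact this
      have hyH : h * (n⁻¹ * x * n) * h⁻¹ ∈ Hb :=
        Hb.mul_mem (Hb.mul_mem hh (hQble hxn)) (Hb.inv_mem hh)
      have hy : v⁻¹ * x * v = h * (n⁻¹ * x * n) * h⁻¹ := by
        rw [← hpr]; group
      have hw : (v⁻¹ * x * v) * x⁻¹ ∈ V := by
        have h1 : x * v * x⁻¹ ∈ V := hVnormal.conj_mem v hv x
        have heq : (v⁻¹ * x * v) * x⁻¹ = v⁻¹ * (x * v * x⁻¹) := by group
        rw [heq]
        exact V.mul_mem (V.inv_mem hv) h1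
      have hwH : (v⁻¹ * x * v) * x⁻¹ ∈ Hb := by
        refine Hb.mul_mem ?_ (Hb.inv_mem (hQble hx))
        rw [hy]; exact hyH
      have hmem : (v⁻¹ * x * v) * x⁻¹ ∈ V ⊓ Hb := ⟨hw, hwH⟩
      rw [hVHbinf, Subgroup.mem_bot] at hmem
      exact mul_inv_eq_one.mp hmem
    have hvCR : v ∈ Subgroup.centralizer (R : Set (G ⧸ K)) := by
      rw [Subgroup.mem_centralizer_iff]
      intro r hr
      have h1 := hvC r (hRQb hr)
      calc r * v = v * (v⁻¹ * r * v) := by group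
      _ = v * r := by rw [h1]
    have hmem : v ∈ V ⊓ Subgroup.centralizer (R : Set (G ⧸ K)) := ⟨hv, hvCR⟩
    rw [hCVR, Subgroup.mem_bot] at hmem
    rw [← hpr, hmem, one_mul]
    exact hh
  -- pull back to `G`
  obtain ⟨Q0⟩ : Nonempty (Sylow q G) := Sylow.nonempty
  set P1 : Sylow q (G ⧸ K) := Q0.mapSurjective hπs with hP1def
  obtain ⟨gb, hgb⟩ := MulAction.exists_smul_eq (G ⧸ K) P1 Qsyl
  obtain ⟨g, rfl⟩ := hπs gb
  refine ⟨g • Q0, ?_⟩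
  have hP1coe : (P1 : Subgroup (G ⧸ K)) = (Q0 : Subgroup G).map π := rfl
  have hmapQ : ((g • Q0 : Sylow q G) : Subgroup G).map π = Qb := by
    have hcoe : ((g • Q0 : Sylow q G) : Subgroup G) = MulAut.conj g • (Q0 : Subgroup G) := rfl
    have hcoe2 : (Qsyl : Subgroup (G ⧸ K)) = MulAut.conj (π g) • (P1 : Subgroup (G ⧸ K)) := by
      rw [← hgb]; rfl
    rw [hcoe, ← hQsylcoe, hcoe2, hP1coe]
    ext b
    constructor
    · intro hb
      obtain ⟨a, ha, rfl⟩ := Subgroup.mem_map.mp hb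
      rw [Subgroup.mem_pointwise_smul_iff_inv_smul_mem] at ha ⊢
      refine Subgroup.mem_map.mpr ⟨g⁻¹ * a * g, ?_, ?_⟩
      · simpa [MulAut.conj_apply] using ha
      · simp only [MulAut.smul_def, MulAut.conj_inv_apply, map_mul, map_inv]
    · intro hb
      rw [Subgroup.mem_pointwise_smul_iff_inv_smul_mem] at hb
      have hb' : (π g)⁻¹ * b * π g ∈ (Q0 : Subgroup G).map π := by
        simpa [MulAut.conj_apply] using hb
      obtain ⟨c, hc, hc2⟩ := Subgroup.mem_map.mp hb'
      refine Subgroup.mem_map.mpr ⟨g * c * g⁻¹, ?_, ?_⟩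
      · rw [Subgroup.mem_pointwise_smul_iff_inv_smul_mem]
        have h5 : (MulAut.conj g)⁻¹ • (g * c * g⁻¹) = c := by
          simp only [MulAut.smul_def, MulAut.conj_inv_apply]
          group
        rw [h5]; exact hc
      · rw [map_mul, map_mul, map_inv, hc2]
        group
  intro x hx
  have hπx : π x ∈ Subgroup.normalizer (Qb : Set (G ⧸ K)) := by
    rw [← hmapQ]
    rw [Subgroup.mem_normalizer_iff]
    intro b
    constructor
    · intro hb
      obtain ⟨a, ha, rfl⟩ := Subgroup.mem_map.mp hb
      have : x * a * x⁻¹ ∈ ((g • Q0 : Sylow q G) : Subgroup G) :=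
        (Subgroup.mem_normalizer_iff.mp hx a).mp ha
      refine Subgroup.mem_map.mpr ⟨x * a * x⁻¹, this, by rw [map_mul, map_mul, map_inv]⟩
    · intro hb
      obtain ⟨a, ha, ha2⟩ := Subgroup.mem_map.mp hb
      have hx' : x⁻¹ * a * x ∈ ((g • Q0 : Sylow q G) : Subgroup G) := by
        have := (Subgroup.mem_normalizer_iff.mp
          ((Subgroup.normalizer (((g • Q0 : Sylow q G) : Subgroup G) : Set G)).inv_mem hx) a).mp ha
        simpa using this
      have : b = π (x⁻¹ * a * x) := by
        rw [map_mul, map_mul, map_inv, ha2]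
        group
      rw [this]
      exact Subgroup.mem_map_of_mem π hx'
  rw [← hcomapHb]
  exact hNle hπx
end

section
/- If H is a non-normal maximal subgroup of a finite solvable group G, then there exist a prime q and a Sylow q-subgroup Q of G such that the normalizer N_G(Q) is contained in H. -/
open Subgroup
open scoped commutatorElement

universe u

/-- Every nontrivial finite group has a minimal nontrivial normal subgroup. -/
private lemma exists_minimal_normal_aux (G : Type u) [Group G] [Finite G] [Nontrivial G] :
    ∃ N : Subgroup G, N.Normal ∧ N ≠ ⊥ ∧
      ∀ M : Subgroup G, M.Normal → M ≠ ⊥ → M ≤ N → M = N := by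
  classical
  have htop : (⊤ : Subgroup G) ≠ ⊥ := by
    obtain ⟨x, hx⟩ := exists_ne (1 : G)
    intro h
    exact hx (by simpa using (h ▸ (Subgroup.mem_top x) : x ∈ (⊥ : Subgroup G)))
  obtain ⟨N, ⟨hn, hb⟩, hmin⟩ :=
    (Set.toFinite {N : Subgroup G | N.Normal ∧ N ≠ ⊥}).exists_minimal ⟨⊤, inferInstance, htop⟩
  exact ⟨N, hn, hb, fun M h1 h2 hle => le_antisymm hle (hmin ⟨h1, h2⟩ hle)⟩

/-- A minimal nontrivial normal subgroup of a finite solvable group is abelian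
and is a `p`-group for some prime `p`. -/
private lemma minimal_normal_comm_pgroup {G : Type u} [Group G] [Finite G] [Group.IsSolvable G]
    {N : Subgroup G} (hN : N.Normal) (hbot : N ≠ ⊥)
    (hmin : ∀ M : Subgroup G, M.Normal → M ≠ ⊥ → M ≤ N → M = N) :
    (∀ x ∈ N, ∀ y ∈ N, Commute x y) ∧ ∃ p : ℕ, p.Prime ∧ IsPGroup p N := by
  classical
  haveI := hN
  -- commutativity
  have hKle : ⁅N, N⁆ ≤ N := by
    rw [Subgroup.commutator_le]
    intro a ha b hb
    rw [commutatorElement_def]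
    exact N.mul_mem (N.mul_mem (N.mul_mem ha hb) (N.inv_mem ha)) (N.inv_mem hb)
  have hcomm : ∀ x ∈ N, ∀ y ∈ N, Commute x y := by
    by_cases hK : ⁅N, N⁆ = (⊥ : Subgroup G)
    · intro x hx y hy
      have h1 : ⁅x, y⁆ ∈ (⊥ : Subgroup G) := hK ▸ Subgroup.commutator_mem_commutator hx hy
      exact commutatorElement_eq_one_iff_commute.mp (Subgroup.mem_bot.mp h1)
    · exfalso
      have hKN : ⁅N, N⁆ = N := hmin _ (Subgroup.commutator_normal N N) hK hKle
      have hle : ∀ n : ℕ, N ≤ derivedSeries G n := by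
        intro n
        induction n with
        | zero => exact le_top
        | succ n ih =>
          rw [derivedSeries_succ]
          calc N = ⁅N, N⁆ := hKN.symm
            _ ≤ ⁅derivedSeries G n, derivedSeries G n⁆ := Subgroup.commutator_mono ih ih
      obtain ⟨n, hn⟩ := (isSolvable_def G).mp inferInstance
      exact hbot (le_bot_iff.mp (hn ▸ hle n))
  refine ⟨hcomm, ?_⟩
  -- p-group
  have hcard : 1 < Nat.card N := (Subgroup.one_lt_card_iff_ne_bot N).mpr hbot
  set p := (Nat.card N).minFac with hpdef
  have hp : p.Prime := Nat.minFac_prime (by omega)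
  haveI : Fact p.Prime := ⟨hp⟩
  have hpdvd : p ∣ Nat.card N := Nat.minFac_dvd _
  obtain ⟨y, hy⟩ := exists_prime_orderOf_dvd_card' (G := N) p hpdvd
  refine ⟨p, hp, ?_⟩
  set T : Subgroup G :=
    { carrier := {x : G | x ∈ N ∧ x ^ p = 1}
      one_mem' := ⟨N.one_mem, one_pow p⟩
      mul_mem' := by
        rintro a b ⟨ha, hap⟩ ⟨hb, hbp⟩
        exact ⟨N.mul_mem ha hb, by rw [(hcomm a ha b hb).mul_pow, hap, hbp, one_mul]⟩
      inv_mem' := by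
        rintro a ⟨ha, hap⟩
        exact ⟨N.inv_mem ha, by rw [inv_pow, hap, inv_one]⟩ } with hTdef
  have hTnormal : T.Normal := by
    constructor
    intro x hx g
    refine ⟨hN.conj_mem x hx.1 g, ?_⟩
    rw [conj_pow, hx.2, mul_one, mul_inv_cancel]
  have hTbot : T ≠ ⊥ := by
    intro h
    have hyT : (y : G) ∈ T := by
      refine ⟨y.2, ?_⟩
      have : y ^ p = 1 := by rw [← hy]; exact pow_orderOf_eq_one y
      have := congrArg (Subtype.val) this
      simpa using this
    rw [h, Subgroup.mem_bot] at hyT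
    have : y = 1 := Subtype.ext (by simpa using hyT)
    rw [this, orderOf_one] at hy
    exact hp.ne_one hy.symm
  have hTle : T ≤ N := fun a ha => ha.1
  have hTN : T = N := hmin T hTnormal hTbot hTle
  intro g
  refine ⟨1, ?_⟩
  have hgT : (g : G) ∈ T := by rw [hTN]; exact g.2
  have : (g : G) ^ p = 1 := hgT.2
  rw [pow_one]
  exact Subtype.ext (by simpa using this)

private theorem theoremA_aux : ∀ (n : ℕ) (G : Type u) [Group G] [Finite G] [Group.IsSolvable G]
    (H : Subgroup G), Nat.card G ≤ n → IsCoatom H → ¬ H.Normal →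
    ∃ (q : ℕ) (_ : q.Prime) (Q : Sylow q G), Subgroup.normalizer ((Q : Subgroup G) : Set G) ≤ H := by
  intro n
  induction n with
  | zero =>
    intro G _ _ _ H hcard _ _
    have := Nat.card_pos (α := G)
    omega
  | succ n ih =>
    intro G _ _ _ H hcard hmax hnn
    classical
    haveI : Nontrivial G := by
      rcases subsingleton_or_nontrivial G with hs | hn
      · exact absurd ((Subgroup.eq_top_iff' H).mpr fun x => by
          rw [Subsingleton.elim x (1 : G)]; exact H.one_mem) hmax.1
      · exact hn
    by_cases hK : H.normalCore = ⊥
    · -- core-free case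
      obtain ⟨N, hNnorm, hNbot, hNmin⟩ := exists_minimal_normal_aux G
      haveI := hNnorm
      obtain ⟨hNcomm, p, hp, hNp⟩ := minimal_normal_comm_pgroup hNnorm hNbot hNmin
      have hNH : ¬ N ≤ H := by
        intro hle
        have := (normal_le_normalCore (H := H) (N := N)).mpr hle
        rw [hK, le_bot_iff] at this
        exact hNbot this
      have hsup : N ⊔ H = ⊤ :=
        hmax.2 _ (lt_of_le_of_ne le_sup_right
          (fun heq => hNH (by rw [heq]; exact le_sup_left)))
      have hdecomp : ∀ g : G, ∃ m ∈ N, ∃ h ∈ H, g = m * h := by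
        intro g
        have hg : g ∈ (↑(N ⊔ H) : Set G) := by
          rw [hsup, Subgroup.coe_top]; trivial
        rw [Subgroup.normal_mul] at hg
        obtain ⟨m, hm, h, hh, hmul⟩ := hg
        exact ⟨m, hm, h, hh, hmul.symm⟩
      -- N ⊓ H = ⊥
      have hinfNormal : (N ⊓ H).Normal := by
        constructor
        intro x hx g
        obtain ⟨m, hm, h, hh, rfl⟩ := hdecomp g
        have hx1 : h * x * h⁻¹ ∈ N ⊓ H :=
          ⟨hNnorm.conj_mem x hx.1 h, H.mul_mem (H.mul_mem hh hx.2) (H.inv_mem hh)⟩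
        have hc := hNcomm m hm _ hx1.1
        have hrw : m * h * x * (m * h)⁻¹ = m * (h * x * h⁻¹) * m⁻¹ := by group
        rw [hrw, hc.eq, mul_inv_cancel_right]
        exact hx1
      have hinf : N ⊓ H = ⊥ := by
        haveI := hinfNormal
        have := (normal_le_normalCore (H := H) (N := N ⊓ H)).mpr inf_le_right
        rwa [hK, le_bot_iff] at this
      -- centralizer N ⊓ H = ⊥
      have hCHnormal : (Subgroup.centralizer (N : Set G) ⊓ H).Normal := by
        constructor
        intro x hx g
        obtain ⟨m, hm, h, hh, rfl⟩ := hdecomp g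
        have hx1 : h * x * h⁻¹ ∈ Subgroup.centralizer (N : Set G) ⊓ H := by
          refine ⟨Subgroup.mem_centralizer_iff.mpr ?_,
            H.mul_mem (H.mul_mem hh hx.2) (H.inv_mem hh)⟩
          intro w hw
          have hw' : h⁻¹ * w * h ∈ N := by
            have := hNnorm.conj_mem w hw h⁻¹
            simpa using this
          have hc := Subgroup.mem_centralizer_iff.mp hx.1 _ hw'
          have := congrArg (fun t => h * t * h⁻¹) hc
          simp only [mul_assoc] at this ⊢
          simpa [mul_assoc] using this
        have hc2 := Subgroup.mem_centralizer_iff.mp hx1.1 m hm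
        have hrw : m * h * x * (m * h)⁻¹ = m * (h * x * h⁻¹) * m⁻¹ := by group
        rw [hrw, hc2, mul_inv_cancel_right]
        exact hx1
      have hCH : Subgroup.centralizer (N : Set G) ⊓ H = ⊥ := by
        haveI := hCHnormal
        have := (normal_le_normalCore
          (H := H) (N := Subgroup.centralizer (N : Set G) ⊓ H)).mpr inf_le_right
        rwa [hK, le_bot_iff] at this
      -- H is nontrivial; get minimal normal subgroup M of H
      have hHbot : H ≠ ⊥ := by
        intro h
        apply hnn
        rw [h]
        exact ⟨fun nv hnv gv => by
          rw [Subgroup.mem_bot] at hnv ⊢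
          rw [hnv]
          simp⟩
      haveI : Nontrivial H := (Subgroup.nontrivial_iff_ne_bot H).mpr hHbot
      obtain ⟨M, hMnorm, hMbot, hMmin⟩ := exists_minimal_normal_aux ↥H
      obtain ⟨_, r, hr, hMp⟩ := minimal_normal_comm_pgroup hMnorm hMbot hMmin
      set R : Subgroup G := M.map H.subtype with hRdef
      have hRH : R ≤ H := Subgroup.map_subtype_le M
      have hRbot : R ≠ ⊥ := by
        intro h
        apply hMbot
        apply Subgroup.map_injective H.subtype_injective (N := G)
        rw [Subgroup.map_bot]
        exact h
      have hRp : IsPGroup r R := hMp.map H.subtype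
      have hRinv : ∀ h ∈ H, ∀ x ∈ R, h * x * h⁻¹ ∈ R := by
        intro h hh x hx
        obtain ⟨m, hm, rfl⟩ := hx
        exact ⟨(⟨h, hh⟩ : H) * m * (⟨h, hh⟩ : H)⁻¹, hMnorm.conj_mem m hm ⟨h, hh⟩, rfl⟩
      -- N ⊓ centralizer R = ⊥
      have hCNRnormal : (N ⊓ Subgroup.centralizer (R : Set G)).Normal := by
        constructor
        intro x hx g
        obtain ⟨m, hm, h, hh, rfl⟩ := hdecomp g
        have hx1 : h * x * h⁻¹ ∈ N ⊓ Subgroup.centralizer (R : Set G) := by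
          refine ⟨hNnorm.conj_mem x hx.1 h, Subgroup.mem_centralizer_iff.mpr ?_⟩
          intro y hy
          have hy' : h⁻¹ * y * h ∈ R := by
            have := hRinv h⁻¹ (H.inv_mem hh) y hy
            simpa using this
          have hc := Subgroup.mem_centralizer_iff.mp hx.2 _ hy'
          have := congrArg (fun t => h * t * h⁻¹) hc
          simp only [mul_assoc] at this ⊢
          simpa [mul_assoc] using this
        have hc2 := hNcomm m hm _ hx1.1
        have hrw : m * h * x * (m * h)⁻¹ = m * (h * x * h⁻¹) * m⁻¹ := by group
        rw [hrw, hc2.eq, mul_inv_cancel_right]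
        exact hx1
      have hCNR : N ⊓ Subgroup.centralizer (R : Set G) = ⊥ := by
        by_contra hne
        have heq := hNmin _ hCNRnormal hne inf_le_left
        have hNC : N ≤ Subgroup.centralizer (R : Set G) :=
          le_trans (le_of_eq heq.symm) inf_le_right
        have hRC : R ≤ Subgroup.centralizer (N : Set G) ⊓ H := by
          intro y hy
          refine ⟨Subgroup.mem_centralizer_iff.mpr ?_, hRH hy⟩
          intro w hw
          exact (Subgroup.mem_centralizer_iff.mp (hNC hw) y hy).symm
        rw [hCH, le_bot_iff] at hRC
        exact hRbot hRC
      -- r ≠ p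
      have hrp : r ≠ p := by
        intro hrpeq
        subst hrpeq
        haveI : Fact r.Prime := ⟨hr⟩
        letI : MulAction R N := MulAction.compHom N ((MulAut.conjNormal : G →* MulAut N).comp R.subtype)
        have hmod := hRp.card_modEq_card_fixedPoints N
        have hdvd : r ∣ Nat.card N := by
          rcases hNp.card_eq_or_dvd with h1 | h2
          · have := (Subgroup.one_lt_card_iff_ne_bot N).mpr hNbot
            omega
          · exact h2
        have h1mem : (1 : N) ∈ MulAction.fixedPoints R N := by
          intro ρ
          show (MulAut.conjNormal (R.subtype ρ)) (1 : N) = 1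
          exact map_one _
        haveI : Nonempty (MulAction.fixedPoints R N) := ⟨⟨1, h1mem⟩⟩
        have hfixpos : 0 < Nat.card (MulAction.fixedPoints R N) := Nat.card_pos
        have hfixdvd : r ∣ Nat.card (MulAction.fixedPoints R N) :=
          Nat.modEq_zero_iff_dvd.mp (hmod.symm.trans (Nat.modEq_zero_iff_dvd.mpr hdvd))
        have h2lt : 1 < Nat.card (MulAction.fixedPoints R N) := by
          have := Nat.le_of_dvd hfixpos hfixdvd
          have := hr.two_le
          omega
        haveI : Nontrivial (MulAction.fixedPoints R N) :=
          Finite.one_lt_card_iff_nontrivial.mp h2lt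
        obtain ⟨⟨x, hxfix⟩, hxne⟩ := exists_ne (⟨1, h1mem⟩ : MulAction.fixedPoints R N)
        have hxC : (x : G) ∈ Subgroup.centralizer (R : Set G) := by
          rw [Subgroup.mem_centralizer_iff]
          intro y hy
          have hfx : (MulAut.conjNormal (R.subtype ⟨y, hy⟩)) x = x := hxfix ⟨y, hy⟩
          have hcoe : y * (x : G) * y⁻¹ = (x : G) := by
            have := congrArg (Subtype.val) hfx
            simpa [MulAut.conjNormal_apply] using this
          rw [← hcoe, inv_mul_cancel_right]
          rw [hcoe]
        have hxin : (x : G) ∈ N ⊓ Subgroup.centralizer (R : Set G) := ⟨x.2, hxC⟩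
        rw [hCNR, Subgroup.mem_bot] at hxin
        exact hxne (Subtype.ext (Subtype.ext (by simpa using hxin)))
      -- cardinality: card G = card N * card H
      have hbij : Function.Bijective (fun x : N × H => (x.1 : G) * (x.2 : G)) := by
        constructor
        · rintro ⟨a, b⟩ ⟨c, d⟩ hfe
          simp only at hfe
          have h2 : (c : G)⁻¹ * a = (d : G) * (b : G)⁻¹ := by
            rw [inv_mul_eq_iff_eq_mul, ← mul_assoc, ← hfe, mul_inv_cancel_right]
          have key : (c : G)⁻¹ * a ∈ N ⊓ H :=
            ⟨N.mul_mem (N.inv_mem c.2) a.2, h2 ▸ H.mul_mem d.2 (H.inv_mem b.2)⟩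
          rw [hinf, Subgroup.mem_bot] at key
          have hac : (a : G) = c := by
            have := key
            rw [inv_mul_eq_one] at this
            exact this.symm
          have hbd : (b : G) = d := by
            have hfe2 := hfe
            rw [hac] at hfe2
            exact mul_left_cancel hfe2
          exact Prod.ext (Subtype.ext hac) (Subtype.ext hbd)
        · intro g
          obtain ⟨m, hm, h, hh, hg⟩ := hdecomp g
          exact ⟨(⟨m, hm⟩, ⟨h, hh⟩), hg.symm⟩
      have hcardG : Nat.card G = Nat.card N * Nat.card H := by
        rw [← Nat.card_prod]
        exact (Nat.card_eq_of_bijective _ hbij).symm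
      -- r does not divide card N
      have hrN : ¬ r ∣ Nat.card N := by
        intro hdvd
        haveI : Fact r.Prime := ⟨hr⟩
        obtain ⟨y, hy⟩ := exists_prime_orderOf_dvd_card' (G := N) r hdvd
        obtain ⟨k, hk⟩ := hNp y
        have h3 : orderOf y ∣ p ^ k := orderOf_dvd_of_pow_eq_one hk
        rw [hy] at h3
        exact hrp ((Nat.prime_dvd_prime_iff_eq hr hp).mp (hr.dvd_of_dvd_pow h3))
      -- build the Sylow subgroup
      haveI : Fact r.Prime := ⟨hr⟩
      obtain ⟨Q₀, hMQ₀⟩ := hMp.exists_le_sylow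
      set Qg : Subgroup G := (Q₀ : Subgroup H).map H.subtype with hQgdef
      have hRQg : R ≤ Qg := Subgroup.map_mono hMQ₀
      obtain ⟨S, hQgS⟩ := (Q₀.2.map H.subtype).exists_le_sylow
      have hScard : Nat.card (S : Subgroup G) = r ^ (Nat.card G).factorization r :=
        S.card_eq_multiplicity
      have hQ₀card : Nat.card (Q₀ : Subgroup H) = r ^ (Nat.card H).factorization r :=
        Q₀.card_eq_multiplicity
      have hfact : (Nat.card G).factorization r = (Nat.card H).factorization r := by
        have hN0 : Nat.card N ≠ 0 := Nat.card_pos.ne'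
        have hH0 : Nat.card H ≠ 0 := Nat.card_pos.ne'
        rw [hcardG, Nat.factorization_mul hN0 hH0]
        simp [Nat.factorization_eq_zero_of_not_dvd hrN]
      have hQgcard : Nat.card Qg = Nat.card (Q₀ : Subgroup H) :=
        (Nat.card_congr
          (Subgroup.equivMapOfInjective (Q₀ : Subgroup H) H.subtype
            H.subtype_injective).toEquiv).symm
      have hSeq : Qg = (S : Subgroup G) := by
        apply Subgroup.eq_of_le_of_card_ge hQgS
        rw [hScard, hfact, ← hQ₀card, hQgcard]
      have hSH : (S : Subgroup G) ≤ H := hSeq ▸ (Subgroup.map_subtype_le (Q₀ : Subgroup H))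
      refine ⟨r, hr, S, ?_⟩
      intro g hg
      obtain ⟨m, hm, h, hh, rfl⟩ := hdecomp g
      suffices hm1 : m = 1 by
        rw [hm1, one_mul]
        exact hh
      have hmc : m ∈ N ⊓ Subgroup.centralizer (R : Set G) := by
        refine ⟨hm, Subgroup.mem_centralizer_iff.mpr ?_⟩
        intro y hy
        have hyS : y ∈ (S : Subgroup G) := hSeq ▸ hRQg hy
        have hginv : (m * h)⁻¹ ∈ Subgroup.normalizer ((S : Subgroup G) : Set G) := inv_mem hg
        have h5 : (m * h)⁻¹ * y * (m * h) ∈ (S : Subgroup G) := by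
          have := (Subgroup.mem_normalizer_iff.mp hginv y).mp hyS
          simpa using this
        have hrw : (m * h)⁻¹ * y * (m * h) = h⁻¹ * (m⁻¹ * y * m) * h := by group
        rw [hrw] at h5
        have hzH : m⁻¹ * y * m ∈ H := by
          have hzrw : m⁻¹ * y * m = h * (h⁻¹ * (m⁻¹ * y * m) * h) * h⁻¹ := by group
          rw [hzrw]
          exact H.mul_mem (H.mul_mem hh (hSH h5)) (H.inv_mem hh)
        have hzy : (m⁻¹ * y * m) * y⁻¹ ∈ N ⊓ H := by
          constructor
          · have h6 : y * m * y⁻¹ ∈ N := hNnorm.conj_mem m hm y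
            have hzrw2 : (m⁻¹ * y * m) * y⁻¹ = m⁻¹ * (y * m * y⁻¹) := by group
            rw [hzrw2]
            exact N.mul_mem (N.inv_mem hm) h6
          · exact H.mul_mem hzH (H.inv_mem (hSH hyS))
        rw [hinf, Subgroup.mem_bot] at hzy
        have hzeq : m⁻¹ * y * m = y := by
          have := hzy
          rwa [mul_inv_eq_one] at this
        calc y * m = m * (m⁻¹ * y * m) := by group
          _ = m * y := by rw [hzeq]
      rw [hCNR, Subgroup.mem_bot] at hmc
      exact hmc
    · -- quotient case
      set K := H.normalCore with hKdef
      haveI : K.Normal := H.normalCore_normal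
      set φ := QuotientGroup.mk' K with hφdef
      have hφ : Function.Surjective φ := QuotientGroup.mk'_surjective K
      haveI : Finite (G ⧸ K) := Quotient.finite _
      have hKH : K ≤ H := H.normalCore_le
      have hcard' : Nat.card (G ⧸ K) ≤ n := by
        have h1 : Nat.card G = Nat.card (G ⧸ K) * Nat.card K :=
          Subgroup.card_eq_card_quotient_mul_card_subgroup K
        have h2 : 1 < Nat.card K := (Subgroup.one_lt_card_iff_ne_bot K).mpr hK
        have h3 : 0 < Nat.card (G ⧸ K) := Nat.card_pos
        nlinarith
      set H' := H.map φ with hH'def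
      have hcomap : H'.comap φ = H := by
        rw [hH'def, Subgroup.comap_map_eq, QuotientGroup.ker_mk']
        exact sup_eq_left.mpr hKH
      have hH'max : IsCoatom H' := by
        constructor
        · intro htop
          apply hmax.1
          rw [← hcomap, htop, Subgroup.comap_top]
        · intro B hB
          have h1 : H < B.comap φ := by
            rw [← hcomap]
            exact lt_of_le_of_ne (Subgroup.comap_mono hB.le)
              (fun h => hB.ne (Subgroup.comap_injective hφ h))
          have h2 := hmax.2 _ h1
          apply Subgroup.comap_injective hφ
          rw [h2, Subgroup.comap_top]
      have hH'nn : ¬ H'.Normal := by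
        intro h
        exact hnn (hcomap ▸ h.comap φ)
      obtain ⟨q, hq, Q', hQ'⟩ := ih (G ⧸ K) H' hcard' hH'max hH'nn
      haveI : Fact q.Prime := ⟨hq⟩
      obtain ⟨Q, hQ⟩ := Sylow.mapSurjective_surjective hφ q Q'
      refine ⟨q, hq, Q, ?_⟩
      have h2 : (Q : Subgroup G).map φ = (Q' : Subgroup (G ⧸ K)) := by
        rw [← hQ]
        rfl
      intro g hg
      have h3 : φ g ∈ Subgroup.normalizer (((Q : Subgroup G).map φ : Subgroup (G ⧸ K)) : Set (G ⧸ K)) :=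
        Subgroup.le_normalizer_map φ ⟨g, hg, rfl⟩
      rw [h2] at h3
      have h4 : φ g ∈ H' := hQ' h3
      rw [← hcomap]
      exact Subgroup.mem_comap.mpr h4

/-- **Theorem A (Vedernikov).** If `H` is a non-normal maximal subgroup of a finite solvable
group `G`, then `N_G(Q) ≤ H` for some Sylow subgroup `Q` of `G`. -/
theorem exists_sylow_normalizer_le_of_maximal_not_normal
    {G : Type*} [Group G] [Finite G] [Group.IsSolvable G]
    (H : Subgroup G) (hmax : IsCoatom H) (hnn : ¬ H.Normal) :
    ∃ (q : ℕ) (_ : q.Prime) (Q : Sylow q G), Subgroup.normalizer ((Q : Subgroup G) : Set G) ≤ H :=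
  theoremA_aux (Nat.card G) G H le_rfl hmax hnn
end

section
/- Let H be a non-normal maximal subgroup of a finite solvable group G and let q be a prime dividing the order of the Fitting subgroup F(H/Core_G H). Then H has a Sylow q-subgroup Q of G (i.e., Q is a Sylow q-subgroup of G contained in H) such that for every subgroup H₁ with Q ⊆ H₁ ⊆ H, the normalizer N_G(H₁) is contained in H. -/
open Pointwise

private lemma card_sup_dvd {G : Type*} [Group G] [Finite G] {A B : Subgroup G}
    (hA : A.Normal) : Nat.card ↥(A ⊔ B) ∣ Nat.card A * Nat.card B := by
  haveI := hA
  have hAJ : A ≤ A ⊔ B := le_sup_left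
  haveI hA' : (A.subgroupOf (A ⊔ B)).Normal := hA.subgroupOf _
  have hcard : Nat.card ↥(A ⊔ B)
      = Nat.card ((A ⊔ B : Subgroup G) ⧸ A.subgroupOf (A ⊔ B)) * Nat.card (A.subgroupOf (A ⊔ B)) :=
    Subgroup.card_eq_card_quotient_mul_card_subgroup _
  have hcA : Nat.card (A.subgroupOf (A ⊔ B)) = Nat.card A :=
    Nat.card_congr (Subgroup.subgroupOfEquivOfLe hAJ).toEquiv
  have hsurj : Function.Surjective
      ((QuotientGroup.mk' (A.subgroupOf (A ⊔ B))).comp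
        (Subgroup.inclusion (le_sup_right : B ≤ A ⊔ B))) := by
    intro x
    induction x using QuotientGroup.induction_on with
    | H j =>
      have hj : (j : G) ∈ (A : Set G) * (B : Set G) := by
        rw [← Subgroup.normal_mul]; exact j.2
      obtain ⟨a, ha, b, hb, hab⟩ := hj
      refine ⟨⟨b, hb⟩, ?_⟩
      rw [MonoidHom.comp_apply, QuotientGroup.mk'_apply]
      apply QuotientGroup.eq.mpr
      have hmem : ((Subgroup.inclusion (le_sup_right : B ≤ A ⊔ B) ⟨b, hb⟩ : ↥(A ⊔ B)) : G)⁻¹ * (j : G) ∈ A := by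
        show b⁻¹ * (j : G) ∈ A
        rw [← hab]
        simpa [mul_assoc] using hA.conj_mem a ha b⁻¹
      exact hmem
  have hdvd : Nat.card ((A ⊔ B : Subgroup G) ⧸ A.subgroupOf (A ⊔ B)) ∣ Nat.card B :=
    Subgroup.card_dvd_of_surjective _ hsurj
  rw [hcard, hcA, mul_comm (Nat.card A)]
  exact Nat.mul_dvd_mul hdvd dvd_rfl

private lemma finset_card_sup_dvd {G : Type*} [Group G] [Finite G] (s : Finset (Subgroup G))
    (hs : ∀ N ∈ s, N.Normal) : Nat.card (s.sup id : Subgroup G) ∣ ∏ N ∈ s, Nat.card N := by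
  classical
  induction s using Finset.induction_on with
  | empty => simp [Subgroup.card_bot]
  | @insert a s ha ih =>
      rw [Finset.sup_insert, Finset.prod_insert ha]
      calc Nat.card (id a ⊔ s.sup id : Subgroup G) ∣ Nat.card a * Nat.card (s.sup id : Subgroup G) :=
            card_sup_dvd (hs a (Finset.mem_insert_self a s))
        _ ∣ Nat.card a * ∏ N ∈ s, Nat.card N :=
            Nat.mul_dvd_mul dvd_rfl (ih fun N hN => hs N (Finset.mem_insert_of_mem hN))

private lemma exists_mem_of_prime_dvd_card_sSup {G : Type*} [Group G] [Finite G] {q : ℕ}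
    (hq : q.Prime) {S : Set (Subgroup G)} (hS : ∀ N ∈ S, N.Normal)
    (h : q ∣ Nat.card (sSup S : Subgroup G)) : ∃ N ∈ S, q ∣ Nat.card N := by
  haveI : Finite (Subgroup G) :=
    Finite.of_injective (fun H : Subgroup G => (H : Set G)) SetLike.coe_injective
  have hfin : S.Finite := Set.toFinite S
  have hsup : sSup S = hfin.toFinset.sup id := by
    rw [Finset.sup_id_eq_sSup, Set.Finite.coe_toFinset]
  rw [hsup] at h
  have hdvd : q ∣ ∏ N ∈ hfin.toFinset, Nat.card N :=
    h.trans (finset_card_sup_dvd _ fun N hN => hS N (hfin.mem_toFinset.mp hN))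
  obtain ⟨N, hN, hqN⟩ := (Nat.Prime.prime hq).dvd_finset_prod_iff _ |>.mp hdvd
  exact ⟨N, hfin.mem_toFinset.mp hN, hqN⟩

private lemma exists_normal_pgroup_of_nilpotent {X : Type*} [Group X] [Finite X] {q : ℕ}
    (hq : q.Prime) {N : Subgroup X} (hN : N.Normal) (hnil : Group.IsNilpotent ↥N)
    (hdvd : q ∣ Nat.card N) :
    ∃ P : Subgroup X, P.Normal ∧ IsPGroup q ↥P ∧ P ≠ ⊥ := by
  haveI : Fact q.Prime := ⟨hq⟩
  obtain ⟨Syl⟩ := (inferInstance : Nonempty (Sylow q ↥N))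
  have htfae := (isNilpotent_of_finite_tfae (G := ↥N)).out 0 3
  have hSylNormal : (Syl : Subgroup ↥N).Normal := htfae.mp hnil q ⟨hq⟩ Syl
  haveI := Sylow.unique_of_normal Syl hSylNormal
  refine ⟨(Syl : Subgroup ↥N).map N.subtype, ⟨?_⟩, Syl.isPGroup'.map N.subtype, ?_⟩
  · intro p hp g
    obtain ⟨n, hn, rfl⟩ := hp
    have hgn : g * (N.subtype n) * g⁻¹ ∈ N := hN.conj_mem _ n.2 g
    set m : ↥N := ⟨g * (N.subtype n) * g⁻¹, hgn⟩ with hm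
    have hmem : m ∈ (Syl : Subgroup ↥N) := by
      obtain ⟨k, hk⟩ := IsPGroup.iff_orderOf.mp Syl.isPGroup' ⟨n, hn⟩
      have hordm : orderOf m = q ^ k := by
        have hconj : SemiconjBy g (N.subtype n) ((m : X)) := by
          simp only [SemiconjBy, hm]
          group
        calc orderOf m = orderOf (m : X) := (Subgroup.orderOf_coe m).symm
          _ = orderOf (N.subtype n) := (hconj.orderOf_eq).symm
          _ = orderOf n := Subgroup.orderOf_coe n
          _ = orderOf ((⟨n, hn⟩ : (Syl : Subgroup ↥N)) : ↥N) := rfl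
          _ = orderOf (⟨n, hn⟩ : (Syl : Subgroup ↥N)) := Subgroup.orderOf_coe _
          _ = q ^ k := hk
      have hzp : IsPGroup q (Subgroup.zpowers m) := by
        apply IsPGroup.of_card
        rw [Nat.card_zpowers, hordm]
      obtain ⟨P', hP'⟩ := hzp.exists_le_sylow
      have heq : P' = Syl := Subsingleton.elim _ _
      exact heq ▸ hP' (Subgroup.mem_zpowers m)
    exact ⟨m, hmem, rfl⟩
  · intro hbot
    have hcardmap : Nat.card ((Syl : Subgroup ↥N).map N.subtype) = Nat.card (Syl : Subgroup ↥N) :=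
      Nat.card_congr (Subgroup.equivMapOfInjective _ _ N.subtype_injective).symm.toEquiv
    rw [hbot, Subgroup.card_bot] at hcardmap
    have hcard : Nat.card (Syl : Subgroup ↥N) = q ^ (Nat.card ↥N).factorization q :=
      Syl.card_eq_multiplicity
    have hpos : 0 < (Nat.card ↥N).factorization q :=
      Nat.Prime.factorization_pos_of_dvd hq Nat.card_pos.ne' hdvd
    rw [← hcardmap] at hcard
    have h2 : 1 < q ^ ((Nat.card ↥N).factorization q) := Nat.one_lt_pow hpos.ne' hq.one_lt
    omega

private lemma le_normalizer_of_conj {G : Type*} [Group G] {A S : Subgroup G}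
    (h : ∀ a ∈ A, ∀ s ∈ S, a * s * a⁻¹ ∈ S) : A ≤ Subgroup.normalizer (S : Set G) := by
  intro a ha
  rw [Subgroup.mem_normalizer_iff]
  intro g
  constructor
  · exact fun hg => h a ha g hg
  · intro hg
    have h2 := h a⁻¹ (A.inv_mem ha) _ hg
    simpa [mul_assoc] using h2

private lemma exists_L {G : Type*} [Group G] [Finite G] (H : Subgroup G) {q : ℕ} (hq : q.Prime)
    (hdvd : q ∣ Nat.card (fittingSubgroup (H ⧸ H.normalCore.subgroupOf H))) :
    ∃ L : Subgroup (G ⧸ H.normalCore), L ≤ H.map (QuotientGroup.mk' H.normalCore) ∧ L ≠ ⊥ ∧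
      IsPGroup q ↥L ∧
      ∀ x ∈ H.map (QuotientGroup.mk' H.normalCore), ∀ l ∈ L, x * l * x⁻¹ ∈ L := by
  classical
  set K := H.normalCore with hK
  set π := QuotientGroup.mk' K with hπ
  -- get a nontrivial normal q-subgroup of the quotient H ⧸ K.subgroupOf H
  obtain ⟨N, hNmem, hqN⟩ := exists_mem_of_prime_dvd_card_sSup hq
    (fun N hN => hN.1) hdvd
  obtain ⟨P, hPnormal, hPp, hPbot⟩ :=
    exists_normal_pgroup_of_nilpotent hq hNmem.1 hNmem.2 hqN
  -- transfer along the isomorphism with the image of H in G ⧸ K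
  set f : ↥H →* G ⧸ K := π.comp H.subtype with hf
  have hker : f.ker = K.subgroupOf H := by
    rw [hf, ← MonoidHom.comap_ker, QuotientGroup.ker_mk']
    rfl
  have hrange : f.range = H.map π := by
    rw [hf, MonoidHom.range_comp, Subgroup.range_subtype]
  haveI : (K.subgroupOf H).Normal := Subgroup.Normal.subgroupOf H.normalCore_normal H
  set e : (H ⧸ K.subgroupOf H) ≃* ↥(H.map π) :=
    (QuotientGroup.quotientMulEquivOfEq hker.symm).trans
      ((QuotientGroup.quotientKerEquivRange f).trans (MulEquiv.subgroupCongr hrange)) with he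
  set P' : Subgroup ↥(H.map π) := P.map e.toMonoidHom with hP'
  have hP'normal : P'.Normal := hPnormal.map e.toMonoidHom e.surjective
  refine ⟨P'.map (H.map π).subtype, Subgroup.map_subtype_le P', ?_, (hPp.map _).map _, ?_⟩
  · intro hbot
    apply hPbot
    have h1 : P' = ⊥ := Subgroup.map_injective (H.map π).subtype_injective
      (by rw [hbot, Subgroup.map_bot])
    exact Subgroup.map_injective e.injective (by rw [← hP', h1, Subgroup.map_bot])
  · intro x hx l hl
    obtain ⟨l₀, hl₀, rfl⟩ := hl
    set x₀ : ↥(H.map π) := ⟨x, hx⟩ with hx₀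
    have : x₀ * l₀ * x₀⁻¹ ∈ P' := hP'normal.conj_mem l₀ hl₀ x₀
    exact ⟨x₀ * l₀ * x₀⁻¹, this, rfl⟩

/-- **Corollary 1.1.** Let `H` be a non-normal maximal subgroup of a finite solvable group `G`
and let `q` be a prime dividing the order of `F(H / Core_G H)`. Then `H` contains a Sylow
`q`-subgroup `Q` of `G` such that `N_G(H₁) ≤ H` for every subgroup `H₁` with `Q ⊆ H₁ ⊆ H`. -/
theorem normalizer_le_of_sylow_le_of_maximal_not_normal
    {G : Type*} [Group G] [Finite G] [Group.IsSolvable G]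
    (H : Subgroup G) (hmax : IsCoatom H) (hnn : ¬ H.Normal)
    (q : ℕ) (hq : q.Prime)
    (hdvd : q ∣ Nat.card (fittingSubgroup (H ⧸ H.normalCore.subgroupOf H))) :
    ∃ Q : Sylow q G, (Q : Subgroup G) ≤ H ∧
      ∀ H₁ : Subgroup G, (Q : Subgroup G) ≤ H₁ → H₁ ≤ H → Subgroup.normalizer (H₁ : Set G) ≤ H := by
  classical
  haveI : Fact q.Prime := ⟨hq⟩
  set K := H.normalCore with hKdef
  set π := QuotientGroup.mk' K with hπdef
  have hπsurj : Function.Surjective π := QuotientGroup.mk'_surjective K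
  set Hb := H.map π with hHbdef
  have hKH : K ≤ H := H.normalCore_le
  have hcomap : Hb.comap π = H := by
    rw [hHbdef, Subgroup.comap_map_eq, QuotientGroup.ker_mk', sup_of_le_left hKH]
  have hHbne : Hb ≠ ⊤ := fun h => hmax.1 (by rw [← hcomap, h, Subgroup.comap_top])
  have hmaxb : ∀ T : Subgroup (G ⧸ K), Hb < T → T = ⊤ := by
    intro T hT
    have h1 : H ≤ T.comap π := by
      have := Subgroup.comap_mono (f := π) hT.le
      rwa [hcomap] at this
    have h2 : T.comap π ≠ H := by
      intro h
      have h3 := Subgroup.map_comap_eq_self_of_surjective hπsurj T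
      rw [h] at h3
      exact hT.ne h3
    have h3 : T.comap π = ⊤ := hmax.2 _ (lt_of_le_of_ne h1 (Ne.symm h2))
    have h4 := Subgroup.map_comap_eq_self_of_surjective hπsurj T
    rw [h3] at h4
    rw [← h4]
    exact Subgroup.map_top_of_surjective π hπsurj
  have hcore : ∀ N : Subgroup (G ⧸ K), N.Normal → N ≤ Hb → N = ⊥ := by
    intro N hN hNle
    have h1 : N.comap π ≤ H := by
      have := Subgroup.comap_mono (f := π) hNle
      rwa [hcomap] at this
    haveI : (N.comap π).Normal := hN.comap π
    have h2 : N.comap π ≤ K := Subgroup.normal_le_normalCore.mpr h1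
    have h3 : N ≤ Subgroup.map π K := by
      have h4 := Subgroup.map_comap_eq_self_of_surjective hπsurj N
      rw [← h4]
      exact Subgroup.map_mono h2
    have h5 : Subgroup.map π K = ⊥ := by
      rw [eq_bot_iff]
      rintro y ⟨k, hk, rfl⟩
      simp only [Subgroup.mem_bot]
      rw [hπdef]
      rwa [QuotientGroup.mk'_apply, QuotientGroup.eq_one_iff]
    rw [h5, le_bot_iff] at h3
    exact h3
  haveI : Nontrivial (G ⧸ K) := by
    rcases subsingleton_or_nontrivial (G ⧸ K) with hs | hn
    · exact absurd (by rw [eq_top_iff]; intro x _; rw [Subsingleton.elim x 1]; exact Hb.one_mem)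
        hHbne
    · exact hn
  -- a minimal nontrivial normal subgroup V
  obtain ⟨V, ⟨hVnormal, hVbot⟩, hVmin⟩ :
      ∃ V : Subgroup (G ⧸ K), (V.Normal ∧ V ≠ ⊥) ∧
        ∀ W : Subgroup (G ⧸ K), W.Normal → W ≠ ⊥ → Nat.card V ≤ Nat.card W := by
    have hne : ((fun W : Subgroup (G ⧸ K) => Nat.card W) '' {W | W.Normal ∧ W ≠ ⊥}).Nonempty :=
      ⟨Nat.card (⊤ : Subgroup (G ⧸ K)), ⟨⊤, ⟨inferInstance, bot_ne_top.symm⟩, rfl⟩⟩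
    obtain ⟨V, hV, hVcard⟩ := Nat.sInf_mem hne
    refine ⟨V, hV, fun W hW hWb => ?_⟩
    calc Nat.card V = _ := hVcard
      _ ≤ Nat.card W := Nat.sInf_le ⟨W, ⟨hW, hWb⟩, rfl⟩
  haveI := hVnormal
  have hVcases : ∀ W : Subgroup (G ⧸ K), W.Normal → W ≤ V → W = ⊥ ∨ W = V := by
    intro W hW hWV
    by_cases hb : W = ⊥
    · exact Or.inl hb
    · exact Or.inr (Subgroup.eq_of_le_of_card_ge hWV (hVmin W hW hb))
  -- V is abelian
  have hVcomm : ∀ a ∈ V, ∀ b ∈ V, a * b = b * a := by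
    have hVder : ⁅V, V⁆ ≤ V := by
      rw [Subgroup.commutator_le]
      intro g₁ h₁ g₂ h₂
      exact V.mul_mem (V.mul_mem (V.mul_mem h₁ h₂) (V.inv_mem h₁)) (V.inv_mem h₂)
    rcases hVcases ⁅V, V⁆ inferInstance hVder with h | h
    · have := Subgroup.commutator_eq_bot_iff_le_centralizer.mp h
      intro a ha b hb
      exact (Subgroup.mem_centralizer_iff.mp (this ha) b hb).symm
    · exfalso
      have htopmap : Subgroup.map V.subtype (⊤ : Subgroup ↥V) = V :=
        SetLike.ext' (by simp [Subgroup.coe_map])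
      have hmap : Subgroup.map V.subtype ⁅(⊤ : Subgroup ↥V), ⊤⁆ = ⁅V, V⁆ := by
        rw [Subgroup.map_commutator, htopmap]
      have htop : ⁅(⊤ : Subgroup ↥V), (⊤ : Subgroup ↥V)⁆ = ⊤ :=
        Subgroup.map_injective V.subtype_injective (by rw [hmap, h, htopmap])
      have hds : ∀ n, derivedSeries ↥V n = ⊤ := by
        intro n
        induction n with
        | zero => rfl
        | succ n ih => rw [derivedSeries_succ, ih, htop]
      obtain ⟨n, hn⟩ := (inferInstance : Group.IsSolvable ↥V).solvable
      have hVtriv : (⊤ : Subgroup ↥V) = ⊥ := by rw [← hn, hds n]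
      apply hVbot
      rw [eq_bot_iff]
      intro x hx
      have : (⟨x, hx⟩ : ↥V) ∈ (⊥ : Subgroup ↥V) := hVtriv ▸ Subgroup.mem_top _
      rw [Subgroup.mem_bot] at this
      simpa [Subgroup.mem_bot] using congrArg Subtype.val this
  -- the normal q-subgroup L of Hb
  obtain ⟨L, hLle, hLbot, hLp, hLconj⟩ := exists_L H hq hdvd
  -- V is not inside Hb, hence V ⊔ Hb = ⊤
  have hVnle : ¬ V ≤ Hb := fun h => hVbot (hcore V hVnormal h)
  have hsup : V ⊔ Hb = ⊤ := by
    rw [sup_comm]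
    exact hmaxb _ (left_lt_sup.mpr hVnle)
  -- V ⊓ Hb = ⊥
  have hVH : V ⊓ Hb = ⊥ := by
    apply hcore _ ?_ inf_le_right
    rw [← Subgroup.normalizer_eq_top_iff, eq_top_iff, ← hsup]
    apply sup_le
    · apply le_normalizer_of_conj
      intro a ha s hs
      have : a * s * a⁻¹ = s := by
        rw [hVcomm a ha s hs.1]
        group
      rw [this]; exact hs
    · apply le_normalizer_of_conj
      intro a ha s hs
      exact ⟨hVnormal.conj_mem s hs.1 a, Hb.mul_mem (Hb.mul_mem ha hs.2) (Hb.inv_mem ha)⟩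
  -- the centralizer of L inside V is trivial
  have hCnormal : (V ⊓ Subgroup.centralizer (L : Set (G ⧸ K))).Normal := by
    rw [← Subgroup.normalizer_eq_top_iff, eq_top_iff, ← hsup]
    apply sup_le
    · apply le_normalizer_of_conj
      intro a ha s hs
      have : a * s * a⁻¹ = s := by
        rw [hVcomm a ha s hs.1]
        group
      rw [this]; exact hs
    · apply le_normalizer_of_conj
      intro a ha s hs
      refine ⟨hVnormal.conj_mem s hs.1 a, Subgroup.mem_centralizer_iff.mpr ?_⟩
      intro l hl
      have hl' : a⁻¹ * l * a ∈ L := by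
        have := hLconj a⁻¹ (Hb.inv_mem ha) l hl
        simpa using this
      have hc := Subgroup.mem_centralizer_iff.mp hs.2 _ hl'
      have hlx : a * (a⁻¹ * l * a) * a⁻¹ = l := by group
      calc l * (a * s * a⁻¹) = (a * (a⁻¹ * l * a) * a⁻¹) * (a * s * a⁻¹) := by rw [hlx]
        _ = a * ((a⁻¹ * l * a) * s) * a⁻¹ := by group
        _ = a * (s * (a⁻¹ * l * a)) * a⁻¹ := by rw [hc]
        _ = (a * s * a⁻¹) * (a * (a⁻¹ * l * a) * a⁻¹) := by group
        _ = (a * s * a⁻¹) * l := by rw [hlx]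
  have hCbot : V ⊓ Subgroup.centralizer (L : Set (G ⧸ K)) = ⊥ := by
    rcases hVcases (V ⊓ Subgroup.centralizer (L : Set (G ⧸ K))) hCnormal inf_le_left with h | h
    · exact h
    · exfalso
      -- then L is normal in the whole group, contradiction
      have hLnormal : L.Normal := by
        rw [← Subgroup.normalizer_eq_top_iff, eq_top_iff, ← hsup]
        apply sup_le
        · apply le_normalizer_of_conj
          intro a ha l hl
          have haC : a ∈ Subgroup.centralizer (L : Set (G ⧸ K)) := by
            have hmem : a ∈ V ⊓ Subgroup.centralizer (L : Set (G ⧸ K)) := by rw [h]; exact ha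
            exact hmem.2
          have : a * l * a⁻¹ = l := by
            rw [← Subgroup.mem_centralizer_iff.mp haC l hl]
            group
          rw [this]; exact hl
        · exact le_normalizer_of_conj (fun a ha l hl => hLconj a ha l hl)
      exact hLbot (hcore L hLnormal hLle)
  -- q does not divide |V|
  have hqV : ¬ q ∣ Nat.card V := by
    intro hdvdV
    letI inst : SMul ↥L ↥V :=
      ⟨fun l v => ⟨(l : G ⧸ K) * v * (l : G ⧸ K)⁻¹, hVnormal.conj_mem _ v.2 _⟩⟩
    have hsmul_def0 : ∀ (l : ↥L) (v : ↥V), ((l • v : ↥V) : G ⧸ K) = l * v * (l : G ⧸ K)⁻¹ :=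
      fun l v => rfl
    letI : MulAction ↥L ↥V :=
      { inst with
        one_smul := fun v => Subtype.ext (by rw [hsmul_def0]; simp)
        mul_smul := fun a b v => Subtype.ext (by
          rw [hsmul_def0, hsmul_def0, hsmul_def0]
          simp [mul_assoc]) }
    have hsmul_def : ∀ (l : ↥L) (v : ↥V), ((l • v : ↥V) : G ⧸ K) = l * v * (l : G ⧸ K)⁻¹ :=
      fun l v => rfl
    have hmod := hLp.card_modEq_card_fixedPoints ↥V
    have hfix1 : ∀ v : ↥V, v ∈ MulAction.fixedPoints ↥L ↥V → v = 1 := by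
      intro v hv
      have hvC : (v : G ⧸ K) ∈ V ⊓ Subgroup.centralizer (L : Set (G ⧸ K)) := by
        refine ⟨v.2, Subgroup.mem_centralizer_iff.mpr ?_⟩
        intro l hl
        have h1 : (⟨l, hl⟩ : ↥L) • v = v := hv ⟨l, hl⟩
        have h2 := congrArg (Subtype.val) h1
        rw [hsmul_def] at h2
        calc l * (v : G ⧸ K) = (l * v * l⁻¹) * l := by group
          _ = (v : G ⧸ K) * l := by rw [h2]
      rw [hCbot, Subgroup.mem_bot] at hvC
      exact Subtype.ext hvC
    have h1fix : (1 : ↥V) ∈ MulAction.fixedPoints ↥L ↥V := by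
      intro l
      ext
      rw [hsmul_def]
      simp
    have hfixcard : Nat.card (MulAction.fixedPoints ↥L ↥V) = 1 := by
      rw [Nat.card_eq_one_iff_unique]
      exact ⟨⟨fun a b => Subtype.ext (by rw [hfix1 a a.2, hfix1 b b.2])⟩, ⟨⟨1, h1fix⟩⟩⟩
    rw [hfixcard] at hmod
    have h0 : Nat.card ↥V % q = 0 := Nat.mod_eq_zero_of_dvd hdvdV
    have h1 : 1 % q = 1 := Nat.mod_eq_of_lt hq.one_lt
    unfold Nat.ModEq at hmod
    omega
  -- the index of H is prime to q
  have hindexV : Hb.index = Nat.card V := by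
    rw [Subgroup.index_eq_card]
    symm
    apply Nat.card_congr
    refine Equiv.ofBijective (fun v : ↥V => ((v : G ⧸ K) : (G ⧸ K) ⧸ Hb)) ⟨?_, ?_⟩
    · intro a b hab
      rw [QuotientGroup.eq] at hab
      have hmem : (a : G ⧸ K)⁻¹ * b ∈ V ⊓ Hb := ⟨V.mul_mem (V.inv_mem a.2) b.2, hab⟩
      rw [hVH, Subgroup.mem_bot] at hmem
      exact Subtype.ext (inv_mul_eq_one.mp hmem)
    · intro x
      induction x using QuotientGroup.induction_on with
      | H g =>
        have hg : g ∈ (V : Set (G ⧸ K)) * (Hb : Set (G ⧸ K)) := by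
          rw [← Subgroup.normal_mul, hsup]
          simp
        obtain ⟨v, hv, h, hh, rfl⟩ := hg
        refine ⟨⟨v, hv⟩, ?_⟩
        rw [QuotientGroup.eq]
        simpa using hh
  have hHindex : H.index = Hb.index := by
    conv_lhs => rw [← hcomap]
    exact Hb.index_comap_of_surjective hπsurj
  have hqHindex : ¬ q ∣ H.index := by rw [hHindex, hindexV]; exact hqV
  -- construct the Sylow subgroup Q of G inside H
  obtain ⟨PH⟩ := (inferInstance : Nonempty (Sylow q ↥H))
  have hpq : IsPGroup q ((PH : Subgroup ↥H).map H.subtype) := PH.isPGroup'.map _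
  have hnd : ¬ q ∣ ((PH : Subgroup ↥H).map H.subtype).index := by
    rw [Subgroup.index_map_subtype]
    intro hd
    rcases (Nat.Prime.dvd_mul hq).mp hd with hcase | hcase
    · exact PH.not_dvd_index hcase
    · exact hqHindex hcase
  refine ⟨hpq.toSylow hnd, ?_, ?_⟩
  · rw [IsPGroup.toSylow_coe]
    exact Subgroup.map_subtype_le _
  intro H₁ hQH₁ hH₁H x hx
  rw [IsPGroup.toSylow_coe] at hQH₁
  have hQH : (PH : Subgroup ↥H).map H.subtype ≤ H := Subgroup.map_subtype_le _
  set S := (hpq.toSylow hnd).mapSurjective hπsurj with hSdef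
  have hScoe : (S : Subgroup (G ⧸ K)) = ((PH : Subgroup ↥H).map H.subtype).map π := by
    rw [hSdef, Sylow.coe_mapSurjective, IsPGroup.toSylow_coe]
  have hSHb : (S : Subgroup (G ⧸ K)) ≤ Hb := by
    rw [hScoe]
    exact Subgroup.map_mono hQH
  have hLS : L ≤ (S : Subgroup (G ⧸ K)) := by
    have hns : (S : Subgroup (G ⧸ K)) ≤ Subgroup.normalizer (L : Set (G ⧸ K)) :=
      le_normalizer_of_conj (fun a ha l hl => hLconj a (hSHb ha) l hl)
    have hps : IsPGroup q ↥(L ⊔ (S : Subgroup (G ⧸ K))) :=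
      IsPGroup.to_sup_of_normal_left' hLp S.isPGroup' hns
    exact le_sup_left.trans (S.3 hps le_sup_right).le
  have hLH₁ : L ≤ H₁.map π := by
    refine hLS.trans ?_
    rw [hScoe]
    exact Subgroup.map_mono hQH₁
  have hxconj : ∀ y ∈ H₁.map π, π x * y * (π x)⁻¹ ∈ H₁.map π := by
    rintro y ⟨h₁, hh₁, rfl⟩
    exact ⟨x * h₁ * x⁻¹, (Subgroup.mem_normalizer_iff.mp hx h₁).mp hh₁, by
      simp [map_mul, map_inv]⟩
  have hx' : (π x) ∈ (V : Set (G ⧸ K)) * (Hb : Set (G ⧸ K)) := by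
    rw [← Subgroup.normal_mul, hsup]
    simp
  obtain ⟨v, hv, h, hh, hvh⟩ := hx'
  have hvC : v ∈ V ⊓ Subgroup.centralizer (L : Set (G ⧸ K)) := by
    refine ⟨hv, Subgroup.mem_centralizer_iff.mpr ?_⟩
    intro l'' hl''
    set l := h⁻¹ * l'' * h with hldef
    have hl : l ∈ L := by
      have := hLconj h⁻¹ (Hb.inv_mem hh) l'' hl''
      simpa [hldef] using this
    have hcmem : π x * l * (π x)⁻¹ ∈ Hb := Subgroup.map_mono hH₁H (hxconj l (hLH₁ hl))
    have hd : (v * l'' * v⁻¹) * l''⁻¹ ∈ V ⊓ Hb := by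
      constructor
      · have hrw : (v * l'' * v⁻¹) * l''⁻¹ = v * (l'' * v⁻¹ * l''⁻¹) := by group
        rw [hrw]
        exact V.mul_mem hv (hVnormal.conj_mem v⁻¹ (V.inv_mem hv) l'')
      · have hrw : v * l'' * v⁻¹ = π x * l * (π x)⁻¹ := by
          rw [← hvh, hldef]
          group
        rw [hrw]
        exact Hb.mul_mem hcmem (Hb.inv_mem (hLle hl''))
    rw [hVH, Subgroup.mem_bot] at hd
    have hconj1 : v * l'' * v⁻¹ = l'' := by
      have h2 : (v * l'' * v⁻¹) * l''⁻¹ * l'' = l'' := by rw [hd]; group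
      calc v * l'' * v⁻¹ = (v * l'' * v⁻¹) * l''⁻¹ * l'' := by group
        _ = l'' := h2
    calc l'' * v = v * (v⁻¹ * l'' * v) := by group
      _ = v * l'' := by
          congr 1
          calc v⁻¹ * l'' * v = v⁻¹ * (v * l'' * v⁻¹) * v := by rw [hconj1]
            _ = l'' := by group
  rw [hCbot, Subgroup.mem_bot] at hvC
  show x ∈ H
  rw [← hcomap]
  refine Subgroup.mem_comap.mpr ?_
  rw [← hvh, hvC]
  simpa using hh
end

section
/- Let p be a prime, let G be a finite p-solvable group, and let M be a non-normal maximal subgroup of G whose index |G:M| is a power of p. If the Fitting subgroup F(M/Core_G M) is trivial, then there exists a Hall p'-subgroup K of G (a subgroup of order coprime to p whose index is a power of p) such that the normalizer N_G(K) is contained in M. -/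
/-- `n` is a `π`-number: every prime divisor of `n` lies in `π`. -/
def IsPiNumber (π : Set ℕ) (n : ℕ) : Prop := ∀ p : ℕ, p.Prime → p ∣ n → p ∈ π

/-- A group `G` is `π`-solvable if it has a normal series each of whose factors is either a
solvable `π`-group or a `π'`-group.  The order of the factor `s (i+1) / s i` is the relative
index `(s i.castSucc).relIndex (s i.succ)`, and solvability of this factor is expressed by
the derived series of `s (i+1)` eventually landing inside `s i`. -/
def IsPiSolvable (π : Set ℕ) (G : Type*) [Group G] : Prop :=
  ∃ (n : ℕ) (s : Fin (n + 1) → Subgroup G),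
    Monotone s ∧ s 0 = ⊥ ∧ s (Fin.last n) = ⊤ ∧ (∀ i, (s i).Normal) ∧
    ∀ i : Fin n,
      (IsPiNumber π ((s i.castSucc).relIndex (s i.succ)) ∧
        ∃ m, (derivedSeries (s i.succ) m).map (s i.succ).subtype ≤ s i.castSucc) ∨
      IsPiNumber πᶜ ((s i.castSucc).relIndex (s i.succ))

theorem IsPiNumber.of_dvd {π : Set ℕ} {m n : ℕ} (h : IsPiNumber π n) (hd : m ∣ n) :
    IsPiNumber π m := fun q hq hqm => h q hq (hqm.trans hd)

theorem exists_pow_of_pi {p n : ℕ} (hp : p.Prime) (hn : n ≠ 0) (h : IsPiNumber {p} n) :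
    ∃ k, n = p ^ k := by
  induction n using Nat.strong_induction_on with
  | _ n ih =>
    rcases eq_or_ne n 1 with rfl | h1
    · exact ⟨0, rfl⟩
    · have hpf : n.minFac.Prime := Nat.minFac_prime h1
      have hdvd : n.minFac ∣ n := Nat.minFac_dvd n
      have hpn : n.minFac = p := h _ hpf hdvd
      obtain ⟨m, hm⟩ := hdvd
      have hm0 : m ≠ 0 := by rintro rfl; rw [mul_zero] at hm; exact hn hm
      have hmlt : m < n := by
        rw [hm]
        calc m = 1 * m := (one_mul m).symm
        _ < n.minFac * m := (Nat.mul_lt_mul_right (Nat.pos_of_ne_zero hm0)).mpr hpf.one_lt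
      obtain ⟨k, hk⟩ := ih m hmlt hm0 (h.of_dvd (Dvd.intro_left _ hm.symm))
      exact ⟨k + 1, by rw [hm, hk, hpn, pow_succ, mul_comm]⟩

-- L7
theorem relindex_sup_dvd_card {G : Type*} [Group G] [Finite G] (N H : Subgroup G) [N.Normal] :
    H.relIndex (N ⊔ H) ∣ Nat.card N := by
  have e1 : Nat.card H * H.relIndex (N ⊔ H) = Nat.card ↥(N ⊔ H) := by
    have := Subgroup.card_mul_index (H.subgroupOf (N ⊔ H))
    rwa [Nat.card_congr (Subgroup.subgroupOfEquivOfLe (le_sup_right : H ≤ N ⊔ H)).toEquiv] at this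
  have e2 : Nat.card N * N.relIndex (N ⊔ H) = Nat.card ↥(N ⊔ H) := by
    have := Subgroup.card_mul_index (N.subgroupOf (N ⊔ H))
    rwa [Nat.card_congr (Subgroup.subgroupOfEquivOfLe (le_sup_left : N ≤ N ⊔ H)).toEquiv] at this
  have e3 : N.relIndex (N ⊔ H) = (N ⊓ H).relIndex H := by
    rw [Subgroup.relIndex_sup_left, ← Subgroup.inf_relIndex_right]
  have e5 : Nat.card ↥(N ⊓ H) * (N ⊓ H).relIndex H = Nat.card H := by
    have := Subgroup.card_mul_index ((N ⊓ H).subgroupOf H)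
    rwa [Nat.card_congr (Subgroup.subgroupOfEquivOfLe (inf_le_right : N ⊓ H ≤ H)).toEquiv] at this
  have hpos : (N ⊓ H).relIndex H ≠ 0 := Subgroup.index_ne_zero_of_finite
  have key : Nat.card ↥(N ⊓ H) * H.relIndex (N ⊔ H) = Nat.card N := by
    have h6 : (Nat.card ↥(N ⊓ H) * H.relIndex (N ⊔ H)) * (N ⊓ H).relIndex H
        = Nat.card N * (N ⊓ H).relIndex H := by
      calc (Nat.card ↥(N ⊓ H) * H.relIndex (N ⊔ H)) * (N ⊓ H).relIndex H
          = (Nat.card ↥(N ⊓ H) * (N ⊓ H).relIndex H) * H.relIndex (N ⊔ H) := by ring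
        _ = Nat.card H * H.relIndex (N ⊔ H) := by rw [e5]
        _ = Nat.card ↥(N ⊔ H) := e1
        _ = Nat.card N * N.relIndex (N ⊔ H) := e2.symm
        _ = Nat.card N * (N ⊓ H).relIndex H := by rw [e3]
    exact Nat.eq_of_mul_eq_mul_right (Nat.pos_of_ne_zero hpos) h6
  exact Dvd.intro_left _ key

-- key fact: relindex of a normal subgroup as a card of an image
theorem relindex_eq_card_map {G : Type*} [Group G] (A X : Subgroup G) [A.Normal] :
    A.relIndex X = Nat.card (X.map (QuotientGroup.mk' A)) := by
  have h := Subgroup.relIndex_ker (QuotientGroup.mk' A) (K := X)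
  rwa [QuotientGroup.ker_mk'] at h

theorem relindex_subgroupOf_dvd {G : Type*} [Group G] [Finite G]
    (A B H : Subgroup G) [A.Normal] :
    ((A.subgroupOf H).relIndex (B.subgroupOf H)) ∣ A.relIndex B := by
  have h1 : (A.subgroupOf H).relIndex (B.subgroupOf H) = A.relIndex (B ⊓ H) := by
    rw [show A.subgroupOf H = A.comap H.subtype from rfl, Subgroup.relIndex_comap,
      Subgroup.subgroupOf_map_subtype]
  rw [h1, relindex_eq_card_map A (B ⊓ H), relindex_eq_card_map A B]
  exact Subgroup.card_dvd_of_le (Subgroup.map_mono inf_le_left)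

theorem relindex_map_dvd {G G' : Type*} [Group G] [Group G'] [Finite G] [Finite G']
    (f : G →* G') (hf : Function.Surjective f) (A B : Subgroup G) [A.Normal] :
    ((A.map f).relIndex (B.map f)) ∣ A.relIndex B := by
  haveI : (A.map f).Normal := Subgroup.Normal.map inferInstance f hf
  have hker : ∀ a ∈ A, ((QuotientGroup.mk' (A.map f)).comp f) a = 1 := by
    intro a ha
    simp only [MonoidHom.comp_apply]
    rw [← MonoidHom.mem_ker, QuotientGroup.ker_mk']
    exact Subgroup.mem_map_of_mem f ha
  set χ : G ⧸ A →* G' ⧸ (A.map f) :=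
    QuotientGroup.lift A ((QuotientGroup.mk' (A.map f)).comp f) hker with hχ
  have hcomp : χ.comp (QuotientGroup.mk' A) = (QuotientGroup.mk' (A.map f)).comp f := by
    ext g; rfl
  rw [relindex_eq_card_map (A.map f) (B.map f), relindex_eq_card_map A B,
    Subgroup.map_map, ← hcomp, ← Subgroup.map_map]
  exact Subgroup.card_dvd_of_surjective (χ.subgroupMap (B.map (QuotientGroup.mk' A)))
    (χ.subgroupMap_surjective _)

theorem IsPiSolvable.subgroup {π : Set ℕ} {G : Type*} [Group G] [Finite G]
    (hG : IsPiSolvable π G) (H : Subgroup G) : IsPiSolvable π H := by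
  obtain ⟨n, s, hmono, hbot, htop, hnorm, hfac⟩ := hG
  refine ⟨n, fun i => (s i).subgroupOf H, fun i j hij => Subgroup.comap_mono (hmono hij),
    show (s 0).subgroupOf H = ⊥ by rw [hbot]; exact Subgroup.bot_subgroupOf H,
    show (s (Fin.last n)).subgroupOf H = ⊤ by rw [htop]; exact Subgroup.top_subgroupOf H,
    fun i => by haveI := hnorm i; infer_instance, fun i => ?_⟩
  rcases hfac i with ⟨hpi, m, hsol⟩ | hpi
  · left
    haveI := hnorm i.castSucc
    refine ⟨hpi.of_dvd (relindex_subgroupOf_dvd _ _ H), m, ?_⟩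
    -- derived series of the subgroup
    intro x hx
    rw [Subgroup.mem_subgroupOf]
    set B := s i.succ
    set BH := B.subgroupOf H
    obtain ⟨y, hy, rfl⟩ := hx
    -- j : BH →* B
    set j : BH →* B := MonoidHom.codRestrict (H.subtype.comp BH.subtype) B
      (fun z => z.2) with hjdef
    have hjcoe : ∀ z : BH, (j z : G) = ((z : H) : G) := fun z => rfl
    have hmem : y ∈ derivedSeries BH m := hy
    have h2 : j y ∈ derivedSeries B m := map_derivedSeries_le_derivedSeries j m
      (Subgroup.mem_map_of_mem j hmem)
    have h3 : (j y : G) ∈ (derivedSeries B m).map B.subtype :=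
      Subgroup.mem_map_of_mem B.subtype h2
    have := hsol h3
    rwa [hjcoe y] at this
  · right
    haveI := hnorm i.castSucc
    exact hpi.of_dvd (relindex_subgroupOf_dvd _ _ H)

theorem IsPiSolvable.of_surjective {π : Set ℕ} {G G' : Type*} [Group G] [Group G']
    [Finite G] [Finite G'] (hG : IsPiSolvable π G) (f : G →* G')
    (hf : Function.Surjective f) : IsPiSolvable π G' := by
  obtain ⟨n, s, hmono, hbot, htop, hnorm, hfac⟩ := hG
  refine ⟨n, fun i => (s i).map f, fun i j hij => Subgroup.map_mono (hmono hij),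
    show (s 0).map f = ⊥ by rw [hbot, Subgroup.map_bot],
    show (s (Fin.last n)).map f = ⊤ by rw [htop]; exact Subgroup.map_top_of_surjective f hf,
    fun i => Subgroup.Normal.map (hnorm i) f hf, fun i => ?_⟩
  rcases hfac i with ⟨hpi, m, hsol⟩ | hpi
  · left
    haveI := hnorm i.castSucc
    refine ⟨hpi.of_dvd (relindex_map_dvd f hf _ _), m, ?_⟩
    set B := s i.succ
    have hds : derivedSeries ((B.map f) : Subgroup G') m
        = (derivedSeries B m).map (f.subgroupMap B) :=
      ((map_derivedSeries_eq (f.subgroupMap_surjective B) m)).symm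
    rw [hds, Subgroup.map_map]
    have hcomm : (B.map f).subtype.comp (f.subgroupMap B) = f.comp B.subtype := by
      ext z; rfl
    rw [hcomm, ← Subgroup.map_map]
    exact (Subgroup.map_mono hsol).trans le_rfl
  · right
    haveI := hnorm i.castSucc
    exact hpi.of_dvd (relindex_map_dvd f hf _ _)

-- minimal normal subgroup existence
theorem exists_minimal_normal (G : Type*) [Group G] [Finite G] [Nontrivial G] :
    ∃ A : Subgroup G, A ≠ ⊥ ∧ A.Normal ∧
      ∀ B : Subgroup G, B.Normal → B ≤ A → B ≠ ⊥ → B = A := by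
  classical
  set S : Set ℕ := {k | ∃ B : Subgroup G, B ≠ ⊥ ∧ B.Normal ∧ Nat.card B = k} with hS
  have hne : S.Nonempty := ⟨Nat.card (⊤ : Subgroup G), ⊤,
    fun h => absurd (h ▸ rfl : (⊤ : Subgroup G) = ⊥).symm bot_ne_top, inferInstance, rfl⟩
  obtain ⟨A, hA0, hAn, hAcard⟩ : ∃ B : Subgroup G, B ≠ ⊥ ∧ B.Normal ∧ Nat.card B = sInf S :=
    Nat.sInf_mem hne
  refine ⟨A, hA0, hAn, fun B hBn hBA hB0 => ?_⟩
  have h1 : Nat.card B ∈ S := ⟨B, hB0, hBn, rfl⟩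
  have h2 : sInf S ≤ Nat.card B := Nat.sInf_le h1
  have h3 : Nat.card B ≤ Nat.card A := Nat.le_of_dvd Nat.card_pos (Subgroup.card_dvd_of_le hBA)
  have h4 : Nat.card A ≤ Nat.card B := hAcard ▸ h2
  have hsub : (B : Set G) ⊆ (A : Set G) := hBA
  have hcard : Set.ncard (A : Set G) ≤ Set.ncard (B : Set G) := by
    rw [← Nat.card_coe_set_eq, ← Nat.card_coe_set_eq]
    exact le_trans (le_of_eq (Nat.card_congr (Equiv.refl _))) (h4.trans (le_of_eq rfl))
  exact SetLike.coe_injective (Set.eq_of_subset_of_ncard_le hsub hcard (A : Set G).toFinite)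

-- a minimal normal subgroup of a π-solvable group is a π-group or a π'-group
theorem minimal_normal_dichotomy {π : Set ℕ} {G : Type*} [Group G] [Finite G]
    (hG : IsPiSolvable π G) (A : Subgroup G) (hA0 : A ≠ ⊥) (hAn : A.Normal)
    (hmin : ∀ B : Subgroup G, B.Normal → B ≤ A → B ≠ ⊥ → B = A) :
    IsPiNumber π (Nat.card A) ∨ IsPiNumber πᶜ (Nat.card A) := by
  obtain ⟨n, s, hmono, hbot, htop, hnorm, hfac⟩ := hG
  -- find the step where A first intersects the series nontrivially
  have hstep : ∃ i : Fin n, A ⊓ s i.castSucc = ⊥ ∧ A ⊓ s i.succ ≠ ⊥ := by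
    by_contra hcon
    push_neg at hcon
    have hall : ∀ j : Fin (n + 1), A ⊓ s j = ⊥ := by
      intro j
      induction j using Fin.induction with
      | zero => rw [hbot, inf_bot_eq]
      | succ i ih => exact hcon i ih
    have := hall (Fin.last n)
    rw [htop, inf_top_eq] at this
    exact hA0 this
  obtain ⟨i, hibot, hine⟩ := hstep
  set T := s i.castSucc with hT
  set S := s i.succ with hSdef
  haveI hTn : T.Normal := hnorm _
  haveI hSn : S.Normal := hnorm _
  have hASn : (A ⊓ S).Normal := by
    constructor
    intro x hx g
    exact ⟨hAn.conj_mem x hx.1 g, hSn.conj_mem x hx.2 g⟩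
  have hAS : A ⊓ S = A := hmin _ hASn inf_le_left hine
  have hAleS : A ≤ S := by rw [← hAS]; exact inf_le_right
  -- A embeds into S ⧸ T.subgroupOf S
  have hdvd : Nat.card A ∣ T.relIndex S := by
    haveI : (T.subgroupOf S).Normal := Subgroup.normal_subgroupOf
    set φ : A →* (S ⧸ T.subgroupOf S) :=
      (QuotientGroup.mk' (T.subgroupOf S)).comp (Subgroup.inclusion hAleS) with hφ
    have hinj : Function.Injective φ := by
      intro x y hxy
      have h1 : φ (x * y⁻¹) = 1 := by rw [map_mul, map_inv, hxy, mul_inv_cancel]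
      have h2 : Subgroup.inclusion hAleS (x * y⁻¹) ∈ T.subgroupOf S := by
        rwa [← QuotientGroup.eq_one_iff (Subgroup.inclusion hAleS (x * y⁻¹))]
      have h3 : ((x * y⁻¹ : A) : G) ∈ T := h2
      have h4 : ((x * y⁻¹ : A) : G) ∈ A ⊓ T := ⟨(x * y⁻¹).2, h3⟩
      rw [hibot] at h4
      have h5 : (x * y⁻¹ : A) = 1 := by
        ext; exact h4
      rw [mul_inv_eq_one] at h5
      exact h5
    have := Subgroup.card_dvd_of_injective φ hinj
    rwa [Subgroup.relIndex, Subgroup.index_eq_card]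
  rcases hfac i with ⟨hpi, _⟩ | hpi
  · exact Or.inl fun q hq hqd => hpi q hq (hqd.trans hdvd)
  · exact Or.inr fun q hq hqd => hpi q hq (hqd.trans hdvd)


universe u

theorem hall_exists (p : ℕ) (hp : p.Prime) :
    ∀ (n : ℕ) (G : Type u) [Group G] [Finite G], Nat.card G ≤ n → IsPiSolvable {p} G →
      ∃ K : Subgroup G, ¬ p ∣ Nat.card K ∧ ∃ a : ℕ, K.index = p ^ a := by
  intro n
  induction n with
  | zero => intro G _ _ hcard _; exact absurd (Nat.card_pos.trans_le hcard) (lt_irrefl 0)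
  | succ n ih =>
    intro G _ _ hcard hG
    rcases subsingleton_or_nontrivial G with hs | hs
    · refine ⟨⊥, ?_, 0, ?_⟩
      · rw [Subgroup.card_bot]; exact fun h => hp.ne_one (Nat.dvd_one.mp h)
      · rw [Subgroup.index_bot, pow_zero, Nat.card_eq_one_iff_unique]
        exact ⟨⟨fun a b => Subsingleton.elim a b⟩, ⟨1⟩⟩
    · obtain ⟨A, hA0, hAn, hAmin⟩ := exists_minimal_normal G
      have hdich := minimal_normal_dichotomy hG A hA0 hAn hAmin
      have hA2 : 1 < Nat.card A := (Subgroup.one_lt_card_iff_ne_bot A).mpr hA0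
      have hGA : Nat.card (G ⧸ A) < Nat.card G := by
        rw [Subgroup.card_eq_card_quotient_mul_card_subgroup A]
        exact (Nat.lt_mul_iff_one_lt_right Nat.card_pos).mpr hA2
      have hQsolv : IsPiSolvable {p} (G ⧸ A) :=
        hG.of_surjective (QuotientGroup.mk' A) (QuotientGroup.mk'_surjective A)
      obtain ⟨Kb, hKbp, a, hKbi⟩ := ih (G ⧸ A) (Nat.lt_succ_iff.mp (hGA.trans_le hcard)) hQsolv
      set Hp := Kb.comap (QuotientGroup.mk' A) with hHp
      have hAHp : A ≤ Hp := by
        intro x hx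
        have : (QuotientGroup.mk' A) x = 1 := by
          rw [← MonoidHom.mem_ker, QuotientGroup.ker_mk']; exact hx
        show (QuotientGroup.mk' A) x ∈ Kb
        rw [this]; exact Kb.one_mem
      have hHpidx : Hp.index = p ^ a := by
        rw [hHp, Subgroup.index_comap_of_surjective _ (QuotientGroup.mk'_surjective A), hKbi]
      have hHpmap : Hp.map (QuotientGroup.mk' A) = Kb :=
        Subgroup.map_comap_eq_self_of_surjective (QuotientGroup.mk'_surjective A) Kb
      have hHpcard : Nat.card Hp = Nat.card A * Nat.card Kb := by
        set f : Hp →* G ⧸ A := (QuotientGroup.mk' A).comp Hp.subtype with hf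
        have hkerf : f.ker = A.subgroupOf Hp := by
          ext x
          simp only [hf, MonoidHom.mem_ker, MonoidHom.comp_apply, Subgroup.coe_subtype,
            Subgroup.mem_subgroupOf]
          rw [← QuotientGroup.eq_one_iff (x : G)]
          rfl
        have hrangef : f.range = Kb := by
          rw [hf, MonoidHom.range_comp, Subgroup.range_subtype]
          exact hHpmap
        have h1 : Nat.card Hp = Nat.card (Hp ⧸ f.ker) * Nat.card f.ker :=
          Subgroup.card_eq_card_quotient_mul_card_subgroup f.ker
        have h2 : Nat.card (Hp ⧸ f.ker) = Nat.card f.range :=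
          Nat.card_congr (QuotientGroup.quotientKerEquivRange f).toEquiv
        have h3 : Nat.card f.ker = Nat.card A := by
          rw [hkerf]
          exact Nat.card_congr (Subgroup.subgroupOfEquivOfLe hAHp).toEquiv
        rw [h1, h2, h3, hrangef, mul_comm]
      rcases hdich with hpi | hpi'
      · -- A is a p-group: use Schur-Zassenhaus inside Hp
        obtain ⟨m, hm⟩ := exists_pow_of_pi hp Nat.card_pos.ne' hpi
        set A' := A.subgroupOf Hp with hA'
        haveI : A'.Normal := Subgroup.normal_subgroupOf
        have hA'card : Nat.card A' = Nat.card A :=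
          Nat.card_congr (Subgroup.subgroupOfEquivOfLe hAHp).toEquiv
        have hA'idx : A'.index = Nat.card Kb := by
          have h1 : Nat.card A' * A'.index = Nat.card Hp := Subgroup.card_mul_index A'
          rw [hA'card, hHpcard] at h1
          exact Nat.eq_of_mul_eq_mul_left Nat.card_pos h1
        have hcop : (Nat.card A').Coprime A'.index := by
          rw [hA'card, hA'idx, hm]
          exact ((hp.coprime_iff_not_dvd).mpr hKbp).pow_left m
        obtain ⟨K', hK'⟩ := Subgroup.exists_right_complement'_of_coprime hcop
        have hK'card : Nat.card K' = Nat.card Kb := by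
          have h1 : Nat.card A' * Nat.card K' = Nat.card Hp := hK'.card_mul
          rw [hA'card, hHpcard] at h1
          exact Nat.eq_of_mul_eq_mul_left Nat.card_pos h1
        refine ⟨K'.map Hp.subtype, ?_, a + m, ?_⟩
        · rw [Nat.card_congr (Subgroup.equivMapOfInjective K' Hp.subtype
            (Subgroup.subtype_injective Hp)).toEquiv.symm, hK'card]
          exact hKbp
        · have hcardK : Nat.card (K'.map Hp.subtype) = Nat.card Kb := by
            rw [← hK'card]
            exact (Nat.card_congr (Subgroup.equivMapOfInjective K' Hp.subtype
              (Subgroup.subtype_injective Hp)).toEquiv).symm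
          have h1 : Nat.card (K'.map Hp.subtype) * (K'.map Hp.subtype).index = Nat.card G :=
            Subgroup.card_mul_index _
          have h2 : Nat.card G = Nat.card (G ⧸ A) * Nat.card A :=
            Subgroup.card_eq_card_quotient_mul_card_subgroup A
          have h3 : Nat.card (G ⧸ A) = Nat.card Kb * p ^ a := by
            have := Subgroup.card_mul_index Kb
            rw [hKbi] at this
            exact this.symm
          rw [hcardK, h2, h3, hm] at h1
          have h4 : Nat.card Kb * (K'.map Hp.subtype).index = Nat.card Kb * (p ^ a * p ^ m) := by
            rw [h1]; ring
          have h5 := Nat.eq_of_mul_eq_mul_left Nat.card_pos h4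
          rw [h5, pow_add]
      · -- A is a p'-group: Hp itself works
        refine ⟨Hp, ?_, a, hHpidx⟩
        rw [hHpcard]
        intro hdvd
        rcases (Nat.Prime.dvd_mul hp).mp hdvd with h | h
        · have := hpi' p hp h
          simp at this
        · exact hKbp h

/-- **Theorem 2(2).** Let `G` be a finite `p`-solvable group and `M` a non-normal maximal
subgroup of `G` with `|G : M| = p^α`.  If `F(M / Core_G M) = 1`, then `N_G(K) ≤ M` for some
Hall `p'`-subgroup `K` of `G` (a subgroup of order not divisible by `p` whose index is a
power of `p`). -/
theorem normalizer_hall_le_of_pSolvable_maximal_not_normal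
    {G : Type*} [Group G] [Finite G] (p : ℕ) (hp : p.Prime)
    (hG : IsPiSolvable {p} G)
    (M : Subgroup G) (hmax : IsCoatom M) (hnn : ¬ M.Normal)
    (hidx : ∃ α : ℕ, M.index = p ^ α)
    (hF : fittingSubgroup (M ⧸ M.normalCore.subgroupOf M) = ⊥) :
    ∃ K : Subgroup G, ¬ p ∣ Nat.card K ∧ (∃ a : ℕ, K.index = p ^ a) ∧
      Subgroup.normalizer (K : Set G) ≤ M := by
  classical
  obtain ⟨α, hα⟩ := hidx
  set C := M.normalCore with hC
  have hCM : C ≤ M := M.normalCore_le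
  set π : G →* G ⧸ C := QuotientGroup.mk' C with hπ
  have hπs : Function.Surjective π := QuotientGroup.mk'_surjective C
  have hkerπ : π.ker = C := QuotientGroup.ker_mk' C
  set Mb := M.map π with hMbdef
  have hcomapMb : Mb.comap π = M := by
    rw [hMbdef, Subgroup.comap_map_eq, hkerπ, sup_of_le_left hCM]
  have hMne : M ≠ ⊤ := hmax.1
  have hMbne : Mb ≠ ⊤ := by
    intro h
    apply hMne
    rw [← hcomapMb, h, Subgroup.comap_top]
  have hMbmax : ∀ X : Subgroup (G ⧸ C), Mb < X → X = ⊤ := by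
    intro X hX
    have h1 : M ≤ X.comap π := le_trans (le_of_eq hcomapMb.symm) (Subgroup.comap_mono hX.le)
    rcases eq_or_lt_of_le h1 with h2 | h2
    · exfalso
      apply hX.ne
      rw [← Subgroup.map_comap_eq_self_of_surjective hπs X, ← h2, ← hMbdef]
    · have h3 : X.comap π = ⊤ := hmax.2 _ h2
      rw [← Subgroup.map_comap_eq_self_of_surjective hπs X, h3]
      exact Subgroup.map_top_of_surjective π hπs
  have hMbcore : Mb.normalCore = ⊥ := by
    have h1 : (Mb.normalCore).comap π ≤ M :=
      le_trans (Subgroup.comap_mono Mb.normalCore_le) (le_of_eq hcomapMb)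
    haveI h2 : ((Mb.normalCore).comap π).Normal := Subgroup.Normal.comap Mb.normalCore_normal π
    have h3 : (Mb.normalCore).comap π ≤ C := Subgroup.normal_le_normalCore.mpr h1
    have h4 : Mb.normalCore ≤ ((Mb.normalCore).comap π).map π :=
      le_of_eq (Subgroup.map_comap_eq_self_of_surjective hπs _).symm
    have h5 : ((Mb.normalCore).comap π).map π ≤ C.map π := Subgroup.map_mono h3
    have h6 : C.map π ≤ ⊥ := by
      rintro x ⟨y, hy, rfl⟩
      rw [Subgroup.mem_bot]
      exact (QuotientGroup.eq_one_iff y).mpr hy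
    exact eq_bot_iff.mpr (h4.trans (h5.trans h6))
  -- transfer of the Fitting hypothesis
  have hFnil : ∀ W : Subgroup ↥Mb, W.Normal → Group.IsNilpotent W → W = ⊥ := by
    intro W hWn hWnil
    set f₀ : ↥M →* G ⧸ C := π.comp M.subtype with hf₀
    have hker₀ : f₀.ker = C.subgroupOf M := by
      ext x
      simp only [hf₀, MonoidHom.mem_ker, MonoidHom.comp_apply, Subgroup.coe_subtype,
        Subgroup.mem_subgroupOf]
      rw [← QuotientGroup.eq_one_iff (x : G)]
      rfl
    have hrange₀ : f₀.range = Mb := by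
      rw [hf₀, MonoidHom.range_comp, Subgroup.range_subtype, hMbdef]
    haveI : (C.subgroupOf M).Normal := Subgroup.normal_subgroupOf
    set e : (↥M ⧸ C.subgroupOf M) ≃* ↥Mb :=
      (QuotientGroup.quotientMulEquivOfEq hker₀.symm).trans
        ((QuotientGroup.quotientKerEquivRange f₀).trans (MulEquiv.subgroupCongr hrange₀)) with he
    set W' : Subgroup (↥M ⧸ C.subgroupOf M) := W.comap e.toMonoidHom with hW'
    have hmapW' : W'.map e.toMonoidHom = W := by
      rw [hW']
      exact Subgroup.map_comap_eq_self_of_surjective e.surjective W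
    haveI hW'n : W'.Normal := Subgroup.Normal.comap hWn e.toMonoidHom
    have hW'nil : Group.IsNilpotent W' := by
      haveI : Group.IsNilpotent ↥(W'.map e.toMonoidHom) := by rw [hmapW']; exact hWnil
      exact nilpotent_of_mulEquiv
        (Subgroup.equivMapOfInjective W' e.toMonoidHom e.injective).symm
    have hW'le : W' ≤ fittingSubgroup (↥M ⧸ C.subgroupOf M) := le_sSup ⟨hW'n, hW'nil⟩
    rw [hF, le_bot_iff] at hW'le
    rw [← hmapW', hW'le, Subgroup.map_bot]
  -- the quotient is a nontrivial p-solvable group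
  have hQnt : Nontrivial (G ⧸ C) := by
    obtain ⟨g, hg⟩ : ∃ g, g ∉ M := by
      by_contra h
      push_neg at h
      exact hMne (Subgroup.eq_top_iff' M |>.mpr h)
    refine ⟨π g, 1, fun h => hg ?_⟩
    have h2 : g ∈ π.ker := MonoidHom.mem_ker.mpr h
    rw [hkerπ] at h2
    exact hCM h2
  have hQsolv : IsPiSolvable {p} (G ⧸ C) := hG.of_surjective π hπs
  -- minimal normal subgroup A of the quotient
  obtain ⟨A, hA0, hAn, hAmin⟩ := exists_minimal_normal (G ⧸ C)
  have hdich := minimal_normal_dichotomy hQsolv A hA0 hAn hAmin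
  -- Mb has p-power index, at least p
  have hMbidx : Mb.index = p ^ α := by
    rw [hMbdef, Subgroup.index_map_eq (H := M) hπs (by rw [hkerπ]; exact hCM), hα]
  have hαpos : α ≠ 0 := by
    intro h
    rw [h, pow_zero] at hMbidx
    exact hMbne (Subgroup.index_eq_one.mp hMbidx)
  -- A is not inside Mb
  have hAnotle : ¬ A ≤ Mb := by
    intro h
    exact hA0 (by rw [← le_bot_iff, ← hMbcore]; exact Subgroup.normal_le_normalCore.mpr h)
  have hAMbtop : A ⊔ Mb = ⊤ := by
    apply hMbmax
    rcases eq_or_lt_of_le (le_sup_right : Mb ≤ A ⊔ Mb) with h | h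
    · exact absurd (h ▸ le_sup_left : A ≤ Mb) hAnotle
    · exact h
  -- index of Mb divides card A, so p divides card A, so A is a p-group
  have hidxA : Mb.index ∣ Nat.card A := by
    have h1 : Mb.index = Mb.relIndex (A ⊔ Mb) := by
      rw [hAMbtop, Subgroup.relIndex_top_right]
    rw [h1]
    exact relindex_sup_dvd_card A Mb
  have hpA : p ∣ Nat.card A := by
    refine dvd_trans ?_ hidxA
    rw [hMbidx]
    exact dvd_pow_self p hαpos
  have hApgroup : IsPiNumber {p} (Nat.card A) := by
    rcases hdich with h | h
    · exact h
    · exact absurd (h p hp hpA) (by simp)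
  obtain ⟨k, hcardA⟩ := exists_pow_of_pi hp Nat.card_pos.ne' hApgroup
  -- A is abelian (elementwise)
  have hAcomm : ∀ x ∈ A, ∀ y ∈ A, x * y = y * x := by
    set Z := A ⊓ Subgroup.centralizer (A : Set (G ⧸ C)) with hZ
    have hZn : Z.Normal := by
      constructor
      intro z hz q
      refine ⟨hAn.conj_mem z hz.1 q, Subgroup.mem_centralizer_iff.mpr fun a ha => ?_⟩
      have h1 : q⁻¹ * a * q ∈ A := by
        have := hAn.conj_mem a ha q⁻¹
        rwa [inv_inv] at this
      have h2 : (q⁻¹ * a * q) * z = z * (q⁻¹ * a * q) :=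
        Subgroup.mem_centralizer_iff.mp hz.2 _ h1
      calc a * (q * z * q⁻¹) = q * ((q⁻¹ * a * q) * z) * q⁻¹ := by group
        _ = q * (z * (q⁻¹ * a * q)) * q⁻¹ := by rw [h2]
        _ = q * z * q⁻¹ * a := by group
    have hZne : Z ≠ ⊥ := by
      haveI : Fact p.Prime := ⟨hp⟩
      have hpg : IsPGroup p ↥A := IsPGroup.of_card hcardA
      haveI : Nontrivial ↥A := (Subgroup.nontrivial_iff_ne_bot A).mpr hA0
      haveI hcnt : Nontrivial (Subgroup.center ↥A) := hpg.center_nontrivial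
      obtain ⟨z, hz1⟩ := exists_ne (1 : Subgroup.center ↥A)
      intro hbot
      apply hz1
      have hzZ : ((z : ↥A) : G ⧸ C) ∈ Z := by
        refine ⟨(z : ↥A).2, Subgroup.mem_centralizer_iff.mpr fun a ha => ?_⟩
        have := Subgroup.mem_center_iff.mp z.2 ⟨a, ha⟩
        have h2 := congrArg (fun w : ↥A => (w : G ⧸ C)) this
        simpa using h2
      rw [hbot, Subgroup.mem_bot] at hzZ
      ext
      exact hzZ
    have hZA : Z = A := hAmin Z hZn inf_le_left hZne
    intro x hx y hy
    have : y ∈ Z := hZA ▸ hy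
    exact Subgroup.mem_centralizer_iff.mp this.2 x hx
  -- decomposition of the quotient
  have hdecomp : ∀ q : G ⧸ C, ∃ x ∈ A, ∃ m ∈ Mb, q = x * m := by
    intro q
    have h1 : q ∈ ((A ⊔ Mb : Subgroup (G ⧸ C)) : Set (G ⧸ C)) := by
      rw [hAMbtop]; trivial
    rw [Subgroup.normal_mul A Mb] at h1
    obtain ⟨x, hx, m, hm, hxm⟩ := Set.mem_mul.mp h1
    exact ⟨x, hx, m, hm, hxm.symm⟩
  -- A ∩ Mb = ⊥
  have hAMbbot : A ⊓ Mb = ⊥ := by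
    have hnormal : (A ⊓ Mb).Normal := by
      constructor
      intro x hx q
      obtain ⟨a, ha, m, hm, rfl⟩ := hdecomp q
      have h1 : m * x * m⁻¹ ∈ A ⊓ Mb := ⟨hAn.conj_mem x hx.1 m, Mb.mul_mem (Mb.mul_mem hm hx.2) (Mb.inv_mem hm)⟩
      have h2 : a * (m * x * m⁻¹) * a⁻¹ = m * x * m⁻¹ := by
        have := hAcomm a ha (m * x * m⁻¹) h1.1
        rw [this]; group
      have h3 : (a * m) * x * (a * m)⁻¹ = a * (m * x * m⁻¹) * a⁻¹ := by group
      rw [h3, h2]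
      exact h1
    rw [← le_bot_iff, ← hMbcore]
    haveI := hnormal
    exact Subgroup.normal_le_normalCore.mpr inf_le_right
  -- Hall p'-subgroup of M
  have hMsolv : IsPiSolvable {p} ↥M := hG.subgroup M
  obtain ⟨K', hK'p, a, hK'i⟩ := hall_exists p hp (Nat.card ↥M) ↥M le_rfl hMsolv
  set K : Subgroup G := K'.map M.subtype with hK
  have hKM : K ≤ M := Subgroup.map_subtype_le K'
  have hKcard : Nat.card K = Nat.card K' :=
    (Nat.card_congr (Subgroup.equivMapOfInjective K' M.subtype
      (Subgroup.subtype_injective M)).toEquiv).symm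
  have hKp : ¬ p ∣ Nat.card K := by rw [hKcard]; exact hK'p
  have hKsub : K.subgroupOf M = K' := Subgroup.comap_map_eq_self_of_injective
    (Subgroup.subtype_injective M) K'
  have hKrel : K.relIndex M = p ^ a := by
    rw [Subgroup.relIndex, hKsub, hK'i]
  have hKidx : K.index = p ^ (a + α) := by
    rw [← Subgroup.relIndex_mul_index hKM, hKrel, hα, pow_add]
  -- image of K in the quotient
  set Kb : Subgroup (G ⧸ C) := K.map π with hKb
  have hKbMb : Kb ≤ Mb := Subgroup.map_mono hKM
  have hKbidx : Kb.index ∣ p ^ (a + α) := by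
    rw [← hKidx]
    exact Subgroup.index_map_dvd (H := K) hπs
  -- Mb is nontrivial
  have hMbbot : Mb ≠ ⊥ := by
    intro h
    apply hnn
    have h1 : M ≤ C := by
      intro x hx
      have h2 : π x ∈ Mb := Subgroup.mem_map_of_mem π hx
      rw [h, Subgroup.mem_bot] at h2
      have h3 : x ∈ π.ker := MonoidHom.mem_ker.mpr h2
      rwa [hkerπ] at h3
    have h4 : M = C := le_antisymm h1 hCM
    rw [h4]
    exact M.normalCore_normal
  haveI hMbnt : Nontrivial ↥Mb := (Subgroup.nontrivial_iff_ne_bot Mb).mpr hMbbot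
  -- a nontrivial normal p'-subgroup of Mb
  have hMbsolv : IsPiSolvable {p} ↥Mb := hQsolv.subgroup Mb
  obtain ⟨A₀, hA₀0, hA₀n, hA₀min⟩ := exists_minimal_normal ↥Mb
  have hA₀dich := minimal_normal_dichotomy hMbsolv A₀ hA₀0 hA₀n hA₀min
  have hA₀p' : ¬ p ∣ Nat.card A₀ := by
    rcases hA₀dich with h | h
    · exfalso
      obtain ⟨k₀, hk₀⟩ := exists_pow_of_pi hp Nat.card_pos.ne' h
      haveI : Fact p.Prime := ⟨hp⟩
      have hnil : Group.IsNilpotent ↥A₀ := (IsPGroup.of_card hk₀).isNilpotent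
      exact hA₀0 (hFnil A₀ hA₀n hnil)
    · intro hdvd
      have := h p hp hdvd
      simp at this
  -- W₀ = A₀ as a subgroup of the quotient, contained in Kb
  set W₀ : Subgroup (G ⧸ C) := A₀.map Mb.subtype with hW₀
  have hW₀Mb : W₀ ≤ Mb := Subgroup.map_subtype_le A₀
  have hW₀card : Nat.card W₀ = Nat.card A₀ :=
    (Nat.card_congr (Subgroup.equivMapOfInjective A₀ Mb.subtype
      (Subgroup.subtype_injective Mb)).toEquiv).symm
  have hW₀ne : W₀ ≠ ⊥ := by
    have h1 := (Subgroup.one_lt_card_iff_ne_bot A₀).mpr hA₀0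
    rw [← hW₀card] at h1
    exact (Subgroup.one_lt_card_iff_ne_bot W₀).mp h1
  have hW₀conj : ∀ m ∈ Mb, ∀ w ∈ W₀, m * w * m⁻¹ ∈ W₀ := by
    intro m hm w hw
    obtain ⟨w₀, hw₀, rfl⟩ := hw
    have h1 := hA₀n.conj_mem w₀ hw₀ ⟨m, hm⟩
    refine ⟨⟨m, hm⟩ * w₀ * ⟨m, hm⟩⁻¹, h1, rfl⟩
  -- W₀ is contained in Kb
  have hW₀Kb : W₀ ≤ Kb := by
    set kk : Subgroup ↥Mb := Kb.subgroupOf Mb with hkk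
    have t1 : kk.relIndex (A₀ ⊔ kk) ∣ Nat.card A₀ := relindex_sup_dvd_card A₀ kk
    have t2 : kk.relIndex (A₀ ⊔ kk) ∣ kk.index := by
      have := Subgroup.relIndex_mul_relIndex kk (A₀ ⊔ kk) ⊤ le_sup_right le_top
      rw [Subgroup.relIndex_top_right, Subgroup.relIndex_top_right] at this
      exact Dvd.intro _ this
    have t3 : kk.index = Kb.relIndex Mb := rfl
    have t4 : Kb.relIndex Mb ∣ Kb.index := Subgroup.relIndex_dvd_index_of_le hKbMb
    have t5 : kk.relIndex (A₀ ⊔ kk) ∣ p ^ (a + α) :=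
      (t2.trans (t3 ▸ t4)).trans hKbidx
    have t6 : kk.relIndex (A₀ ⊔ kk) = 1 := by
      have hcop : Nat.Coprime (p ^ (a + α)) (Nat.card A₀) :=
        Nat.Coprime.pow_left (a + α) ((hp.coprime_iff_not_dvd).mpr hA₀p')
      exact Nat.dvd_one.mp (hcop ▸ Nat.dvd_gcd t5 t1)
    have t7 : A₀ ≤ kk := le_trans le_sup_left (Subgroup.relIndex_eq_one.mp t6)
    have t8 := Subgroup.map_mono (f := Mb.subtype) t7
    rw [Subgroup.subgroupOf_map_subtype] at t8
    exact le_trans t8 inf_le_left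
  -- the centralizer of W₀ inside A is trivial
  set E : Subgroup (G ⧸ C) := A ⊓ Subgroup.centralizer (W₀ : Set (G ⧸ C)) with hE
  have hEbot : E = ⊥ := by
    have hEn : E.Normal := by
      constructor
      intro x hx q
      obtain ⟨b, hb, m, hm, rfl⟩ := hdecomp q
      have hmx : m * x * m⁻¹ ∈ E := by
        refine ⟨hAn.conj_mem x hx.1 m, Subgroup.mem_centralizer_iff.mpr fun w hw => ?_⟩
        have h1 : m⁻¹ * w * m ∈ W₀ := by
          have := hW₀conj m⁻¹ (Mb.inv_mem hm) w hw
          rwa [inv_inv] at this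
        have h2 : (m⁻¹ * w * m) * x = x * (m⁻¹ * w * m) :=
          Subgroup.mem_centralizer_iff.mp hx.2 _ h1
        calc w * (m * x * m⁻¹) = m * ((m⁻¹ * w * m) * x) * m⁻¹ := by group
          _ = m * (x * (m⁻¹ * w * m)) * m⁻¹ := by rw [h2]
          _ = (m * x * m⁻¹) * w := by group
      have h3 : b * (m * x * m⁻¹) * b⁻¹ = m * x * m⁻¹ := by
        have := hAcomm b hb (m * x * m⁻¹) hmx.1
        rw [this]; group
      have h4 : (b * m) * x * (b * m)⁻¹ = b * (m * x * m⁻¹) * b⁻¹ := by group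
      rw [h4, h3]
      exact hmx
    by_contra hEne
    have hEA : E = A := hAmin E hEn inf_le_left hEne
    -- then W₀ would be normal in the whole quotient
    have hW₀n : W₀.Normal := by
      constructor
      intro w hw q
      obtain ⟨b, hb, m, hm, rfl⟩ := hdecomp q
      have h1 : m * w * m⁻¹ ∈ W₀ := hW₀conj m hm w hw
      have h2 : b ∈ E := hEA ▸ hb
      have h3 : (m * w * m⁻¹) * b = b * (m * w * m⁻¹) :=
        Subgroup.mem_centralizer_iff.mp h2.2 _ h1
      have h4 : (b * m) * w * (b * m)⁻¹ = b * (m * w * m⁻¹) * b⁻¹ := by group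
      have h5 : b * (m * w * m⁻¹) * b⁻¹ = m * w * m⁻¹ := by
        rw [← h3]; group
      rw [h4, h5]
      exact h1
    haveI := hW₀n
    exact hW₀ne (by rw [← le_bot_iff, ← hMbcore]; exact Subgroup.normal_le_normalCore.mpr hW₀Mb)
  -- conclusion
  refine ⟨K, hKp, ⟨a + α, hKidx⟩, ?_⟩
  intro g hg
  -- π g normalizes Kb
  have hgnorm : ∀ x ∈ Kb, (π g)⁻¹ * x * (π g) ∈ Kb := by
    intro x hx
    obtain ⟨y, hy, rfl⟩ := hx
    have h1 : g⁻¹ * y * g ∈ K := by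
      have h2 := Subgroup.mem_normalizer_iff.mp ((Subgroup.normalizer (K : Set G)).inv_mem hg) y
      have h3 := h2.mp hy
      rwa [inv_inv] at h3
    refine ⟨g⁻¹ * y * g, h1, by rw [map_mul, map_mul, map_inv]⟩
  obtain ⟨b, hb, m, hm, hgbm⟩ := hdecomp (π g)
  -- b centralizes W₀
  have hbE : b ∈ E := by
    refine ⟨hb, Subgroup.mem_centralizer_iff.mpr fun w hw => ?_⟩
    have hwKb : w ∈ Kb := hW₀Kb hw
    have h1 : (π g)⁻¹ * w * (π g) ∈ Kb := hgnorm w hwKb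
    have h2 : b⁻¹ * w * b ∈ Mb := by
      have h3 : (π g)⁻¹ * w * (π g) = m⁻¹ * (b⁻¹ * w * b) * m := by rw [hgbm]; group
      have h4 : m⁻¹ * (b⁻¹ * w * b) * m ∈ Mb := by rw [← h3]; exact hKbMb h1
      have h5 : m * (m⁻¹ * (b⁻¹ * w * b) * m) * m⁻¹ ∈ Mb :=
        Mb.mul_mem (Mb.mul_mem hm h4) (Mb.inv_mem hm)
      have h6 : m * (m⁻¹ * (b⁻¹ * w * b) * m) * m⁻¹ = b⁻¹ * w * b := by group
      rwa [h6] at h5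
    have h7 : b⁻¹ * w * b * w⁻¹ ∈ A := by
      have h8 : w * b * w⁻¹ ∈ A := hAn.conj_mem b hb w
      have h10 : b⁻¹ * (w * b * w⁻¹) ∈ A := A.mul_mem (A.inv_mem hb) h8
      have h11 : b⁻¹ * (w * b * w⁻¹) = b⁻¹ * w * b * w⁻¹ := by group
      rwa [h11] at h10
    have h12 : b⁻¹ * w * b * w⁻¹ ∈ Mb :=
      Mb.mul_mem h2 (Mb.inv_mem (hW₀Mb hw))
    have h13 : b⁻¹ * w * b * w⁻¹ ∈ A ⊓ Mb := ⟨h7, h12⟩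
    rw [hAMbbot, Subgroup.mem_bot] at h13
    have h14 : b⁻¹ * w * b = w := by
      have := congrArg (fun z => z * w) h13
      simpa [mul_assoc] using this
    calc w * b = b * (b⁻¹ * w * b) := by group
      _ = b * w := by rw [h14]
  have hb1 : b = 1 := by
    have := hEbot ▸ hbE
    rwa [Subgroup.mem_bot] at this
  have hπgMb : π g ∈ Mb := by
    rw [hgbm, hb1, one_mul]
    exact hm
  have : g ∈ Mb.comap π := hπgMb
  rwa [hcomapMb] at this
end
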